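/- arXiv:1411.5967 — 12 statements merged into one kernel-verified Lean document; each statement's English description precedes it below -/
import Mathlib

section
/- Let f_r(X) = Σ_{i=0}^{n−r−1} X^{(1+q^r)q^i} + Σ_{i=0}^{r−1} X^{(1+q^{n−r})q^i} ∈ F_p[X]. Then, as polynomials over F_p, f_r(X)^q − f_r(X) = (X^{q^n} − X)·(X^{q^r} + X^{q^{n−r}}). -/
open Polynomial Finset

lemma aux_sum (p e : ℕ) (hp : p.Prime) (c k : ℕ) :
    (∑ i ∈ Finset.range k, (Polynomial.X : Polynomial (ZMod p)) ^ (c * (p ^ e) ^ i)) ^ p ^ e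
      - ∑ i ∈ Finset.range k, (Polynomial.X : Polynomial (ZMod p)) ^ (c * (p ^ e) ^ i)
      = X ^ (c * (p ^ e) ^ k) - X ^ c := by
  haveI : Fact p.Prime := ⟨hp⟩
  rw [sum_pow_char_pow]
  have h1 : ∀ i : ℕ, ((X : Polynomial (ZMod p)) ^ (c * (p ^ e) ^ i)) ^ p ^ e
      = X ^ (c * (p ^ e) ^ (i + 1)) := by
    intro i
    rw [← pow_mul, pow_succ, mul_assoc]
  simp only [h1]
  rw [← Finset.sum_sub_distrib, Finset.sum_range_sub (fun i => (X : Polynomial (ZMod p)) ^ (c * (p ^ e) ^ i)), pow_zero, mul_one]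

/-- Let `p` be a prime, `q = p^e`, and `n ≥ 2`, `⌈n/2⌉ ≤ r ≤ n-1`, `gcd(n,r) = 1`.
Let `f_r(X) = Σ_{i=0}^{n−r−1} X^{(1+q^r)q^i} + Σ_{i=0}^{r−1} X^{(1+q^{n−r})q^i} ∈ F_p[X]`.
Then `f_r(X)^q − f_r(X) = (X^{q^n} − X)·(X^{q^r} + X^{q^{n−r}})`. -/
theorem stmt0 (p e q n r : ℕ) (hp : p.Prime) (he : 0 < e) (hq : q = p ^ e)
    (hn : 2 ≤ n) (hr1 : (n + 1) / 2 ≤ r) (hr2 : r ≤ n - 1) (hgcd : Nat.gcd n r = 1) :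
    (∑ i ∈ Finset.range (n - r), (Polynomial.X : Polynomial (ZMod p)) ^ ((1 + q ^ r) * q ^ i)
        + ∑ i ∈ Finset.range r, (Polynomial.X : Polynomial (ZMod p)) ^ ((1 + q ^ (n - r)) * q ^ i)) ^ q
      - (∑ i ∈ Finset.range (n - r), (Polynomial.X : Polynomial (ZMod p)) ^ ((1 + q ^ r) * q ^ i)
        + ∑ i ∈ Finset.range r, (Polynomial.X : Polynomial (ZMod p)) ^ ((1 + q ^ (n - r)) * q ^ i))
      = ((Polynomial.X : Polynomial (ZMod p)) ^ q ^ n - Polynomial.X)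
        * ((Polynomial.X : Polynomial (ZMod p)) ^ q ^ r + Polynomial.X ^ q ^ (n - r)) := by
  haveI : Fact p.Prime := ⟨hp⟩
  subst hq
  rw [add_pow_char_pow]
  have key : ∀ c k : ℕ,
      (∑ i ∈ Finset.range k, (Polynomial.X : Polynomial (ZMod p)) ^ (c * (p ^ e) ^ i)) ^ p ^ e
        = ∑ i ∈ Finset.range k, (Polynomial.X : Polynomial (ZMod p)) ^ (c * (p ^ e) ^ i)
          + (X ^ (c * (p ^ e) ^ k) - X ^ c) := by
    intro c k
    have := aux_sum p e hp c k
    linear_combination this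
  rw [key, key]
  have hrn : r ≤ n := le_trans hr2 (Nat.sub_le n 1)
  have hsum : (n - r) + r = n := Nat.sub_add_cancel hrn
  have e1 : (1 + (p ^ e) ^ r) * (p ^ e) ^ (n - r) = (p ^ e) ^ (n - r) + (p ^ e) ^ n := by
    rw [add_mul, one_mul, ← pow_add]
    rw [show r + (n - r) = n by omega]
  have e2 : (1 + (p ^ e) ^ (n - r)) * (p ^ e) ^ r = (p ^ e) ^ r + (p ^ e) ^ n := by
    rw [add_mul, one_mul, ← pow_add]
    rw [show (n - r) + r = n by omega]
  rw [e1, e2]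
  have hx : ∀ a b : ℕ, (X : Polynomial (ZMod p)) ^ (a + b) = X ^ a * X ^ b := fun a b => pow_add X a b
  rw [hx, hx]
  have h1 : (1 + (p ^ e) ^ r) = 1 + (p ^ e) ^ r := rfl
  rw [show (1 + (p ^ e) ^ r) = (p^e)^r + 1 by omega, show (1 + (p ^ e) ^ (n-r)) = (p^e)^(n-r) + 1 by omega, hx, hx, pow_one]
  ring
end

section
/- For every element a of the field F_{q^n} with q^n elements, the value f_r(a) = Σ_{i=0}^{n−r−1} a^{(1+q^r)q^i} + Σ_{i=0}^{r−1} a^{(1+q^{n−r})q^i} satisfies f_r(a)^q = f_r(a); equivalently, f_r(a) lies in the subfield F_q of F_{q^n}. -/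
/-- For every element `a` of the field `F_{q^n}` with `q^n` elements, the value
`f_r(a) = Σ_{i=0}^{n−r−1} a^{(1+q^r)q^i} + Σ_{i=0}^{r−1} a^{(1+q^{n−r})q^i}`
satisfies `f_r(a)^q = f_r(a)`, i.e. `f_r(a)` lies in the subfield with `q` elements. -/
theorem stmt2 (p e q n r : ℕ) (hp : p.Prime) (he : 0 < e) (hq : q = p ^ e)
    (hn : 2 ≤ n) (hr1 : (n + 1) / 2 ≤ r) (hr2 : r ≤ n - 1) (hgcd : Nat.gcd n r = 1)
    (F : Type*) [Field F] [Fintype F] (hF : Fintype.card F = q ^ n) (a : F) :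
    (∑ i ∈ Finset.range (n - r), a ^ ((1 + q ^ r) * q ^ i)
        + ∑ i ∈ Finset.range r, a ^ ((1 + q ^ (n - r)) * q ^ i)) ^ q
      = ∑ i ∈ Finset.range (n - r), a ^ ((1 + q ^ r) * q ^ i)
        + ∑ i ∈ Finset.range r, a ^ ((1 + q ^ (n - r)) * q ^ i) := by
  have hrn : r ≤ n := by omega
  -- identify the characteristic
  haveI : CharP F (ringChar F) := ringChar.charP F
  obtain ⟨m, hm, hcard⟩ := FiniteField.card F (ringChar F)
  have hpchar : ringChar F = p := by
    have hdvd : p ∣ ringChar F ^ (m : ℕ) := by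
      rw [← hcard, hF, hq, ← pow_mul]
      exact dvd_pow_self p (by positivity)
    exact ((Nat.prime_dvd_prime_iff_eq hp hm).mp (hp.dvd_of_dvd_pow hdvd)).symm
  haveI : CharP F p := by rw [← hpchar]; infer_instance
  haveI : ExpChar F p := ExpChar.prime hp
  have hq2 : ∀ x : F, x ^ q = iterateFrobenius F p e x := by
    intro x; rw [iterateFrobenius_def, hq]
  have hacard : a ^ q ^ n = a := by rw [← hF]; exact FiniteField.pow_card a
  set F1 : ℕ → F := fun i => a ^ ((1 + q ^ r) * q ^ i) with hF1
  set F2 : ℕ → F := fun i => a ^ ((1 + q ^ (n - r)) * q ^ i) with hF2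
  have h1 : F1 (n - r) = F2 0 := by
    have he1 : (1 + q ^ r) * q ^ (n - r) = q ^ (n - r) + q ^ n := by
      rw [add_mul, one_mul, ← pow_add]
      congr 2
      omega
    show a ^ ((1 + q ^ r) * q ^ (n - r)) = a ^ ((1 + q ^ (n - r)) * q ^ 0)
    rw [he1, pow_zero, mul_one, pow_add, hacard, pow_add, pow_one]
    ring
  have h2 : F2 r = F1 0 := by
    have he2 : (1 + q ^ (n - r)) * q ^ r = q ^ r + q ^ n := by
      rw [add_mul, one_mul, ← pow_add]
      congr 2
      omega
    show a ^ ((1 + q ^ (n - r)) * q ^ r) = a ^ ((1 + q ^ r) * q ^ 0)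
    rw [he2, pow_zero, mul_one, pow_add, hacard, pow_add, pow_one]
    ring
  have step : (∑ i ∈ Finset.range (n - r), F1 i + ∑ i ∈ Finset.range r, F2 i) ^ q
      = ∑ i ∈ Finset.range (n - r), F1 (i + 1) + ∑ i ∈ Finset.range r, F2 (i + 1) := by
    rw [hq2, map_add, map_sum, map_sum]
    congr 1 <;> refine Finset.sum_congr rfl fun i _ => ?_ <;>
      simp only [hF1, hF2, ← hq2, ← pow_mul, pow_succ, ← mul_assoc]
  have cancel : ∑ i ∈ Finset.range (n - r), F1 (i + 1) + ∑ i ∈ Finset.range r, F2 (i + 1)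
      = ∑ i ∈ Finset.range (n - r), F1 i + ∑ i ∈ Finset.range r, F2 i := by
    have e1 := Finset.sum_range_succ' F1 (n - r)
    have e2 := Finset.sum_range_succ' F2 r
    have e3 := Finset.sum_range_succ F1 (n - r)
    have e4 := Finset.sum_range_succ F2 r
    have key : ∑ i ∈ Finset.range (n - r), F1 (i + 1) + ∑ i ∈ Finset.range r, F2 (i + 1)
        + (F1 0 + F2 0)
        = ∑ i ∈ Finset.range (n - r), F1 i + ∑ i ∈ Finset.range r, F2 i + (F1 0 + F2 0) := by
      have : ∑ i ∈ Finset.range (n - r + 1), F1 i + ∑ i ∈ Finset.range (r + 1), F2 i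
          = ∑ i ∈ Finset.range (n - r), F1 i + ∑ i ∈ Finset.range r, F2 i + (F1 0 + F2 0) := by
        rw [e3, e4, h1, h2]; ring
      rw [← this, e1, e2]; ring
    exact add_right_cancel key
  rw [step, cancel]
end

section
/- The number of pairs (a, b) ∈ F_{q^n} × F_{q^n} satisfying T_n(b) = f_r(a) equals q^{2n−1}. (Consequently the curve X_{n,r}: T_n(y) = f_r(x), whose projective closure has exactly one point at infinity, has q^{2n−1} + 1 rational points over F_{q^n}.) -/
open Polynomial Finset

/-- Counting roots: the number of zeros of a nonzero polynomial is at most its degree. -/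
lemma aux_card_eval_zero_le {F : Type*} [Field F] [Fintype F]
    (P : Polynomial F) (hP : P ≠ 0) :
    Nat.card {x : F // Polynomial.eval x P = 0} ≤ P.natDegree := by
  classical
  rw [Nat.card_eq_fintype_card, Fintype.card_subtype]
  calc (Finset.univ.filter fun x => Polynomial.eval x P = 0).card
      ≤ P.roots.toFinset.card := by
        apply Finset.card_le_card
        intro x hx
        simp only [Finset.mem_filter] at hx
        simp [Polynomial.mem_roots, hP, Polynomial.IsRoot, hx.2]
    _ ≤ Multiset.card P.roots := Multiset.toFinset_card_le _
    _ ≤ P.natDegree := Polynomial.card_roots' P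

/-- The number of pairs `(a, b) ∈ F_{q^n} × F_{q^n}` satisfying `T_n(b) = f_r(a)`
equals `q^{2n−1}`, where `T_n(z) = z + z^q + ⋯ + z^{q^{n−1}}` and
`f_r(a) = Σ_{i=0}^{n−r−1} a^{(1+q^r)q^i} + Σ_{i=0}^{r−1} a^{(1+q^{n−r})q^i}`. -/
theorem stmt3 (p e q n r : ℕ) (hp : p.Prime) (he : 0 < e) (hq : q = p ^ e)
    (hn : 2 ≤ n) (hr1 : (n + 1) / 2 ≤ r) (hr2 : r ≤ n - 1) (hgcd : Nat.gcd n r = 1)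
    (F : Type*) [Field F] [Fintype F] (hF : Fintype.card F = q ^ n) :
    Nat.card {ab : F × F //
        (∑ i ∈ Finset.range n, ab.2 ^ q ^ i)
          = ∑ i ∈ Finset.range (n - r), ab.1 ^ ((1 + q ^ r) * q ^ i)
            + ∑ i ∈ Finset.range r, ab.1 ^ ((1 + q ^ (n - r)) * q ^ i)}
      = q ^ (2 * n - 1) := by
  classical
  haveI : Fact p.Prime := ⟨hp⟩
  have hq2 : 2 ≤ q := by
    rw [hq]
    exact le_trans hp.two_le (Nat.le_self_pow (by omega) p)
  have hq1 : 1 ≤ q := le_trans one_le_two hq2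
  have hq0 : 0 < q := hq1
  -- characteristic of F is p
  haveI hcharF : CharP F p := by
    obtain ⟨p', hp'⟩ := CharP.exists F
    haveI := hp'
    obtain ⟨m, hp'prime, hcard⟩ := FiniteField.card F p'
    have : p' = p := by
      have hdvd : p' ∣ q ^ n := by
        rw [← hF, hcard]
        exact dvd_pow_self p' (by positivity)
      rw [hq, ← pow_mul] at hdvd
      exact (Nat.prime_dvd_prime_iff_eq hp'prime hp).mp
        (hp'prime.dvd_of_dvd_pow hdvd)
    rwa [this] at hp'
  have hrn : r ≤ n := le_trans hr2 (Nat.sub_le n 1)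
  -- the trace-like additive map
  have hqpow : ∀ i : ℕ, q ^ i = p ^ (e * i) := by
    intro i; rw [hq, ← pow_mul]
  let T : F →+ F :=
    { toFun := fun b => ∑ i ∈ Finset.range n, b ^ q ^ i
      map_zero' := by
        apply Finset.sum_eq_zero
        intro i _
        exact zero_pow (by positivity)
      map_add' := by
        intro x y
        show ∑ i ∈ Finset.range n, (x + y) ^ q ^ i
          = (∑ i ∈ Finset.range n, x ^ q ^ i) + ∑ i ∈ Finset.range n, y ^ q ^ i
        rw [← Finset.sum_add_distrib]
        apply Finset.sum_congr rfl
        intro i _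
        rw [hqpow i]
        exact add_pow_char_pow x y p (e * i) }
  have T_apply : ∀ b : F, T b = ∑ i ∈ Finset.range n, b ^ q ^ i := fun _ => rfl
  have hpow_card : ∀ b : F, b ^ q ^ n = b := by
    intro b; rw [← hF]; exact FiniteField.pow_card b
  -- T b lands in the subfield: (T b)^q = T b
  have hTfix : ∀ b : F, (T b) ^ q = T b := by
    intro b
    have hfrob : ∀ x : F, x ^ q = iterateFrobenius F p e x := by
      intro x; rw [iterateFrobenius_def, hq]
    rw [T_apply, hfrob, map_sum]
    have h1 : ∀ i ∈ Finset.range n, iterateFrobenius F p e (b ^ q ^ i) = b ^ q ^ (i + 1) := by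
      intro i _
      rw [← hfrob, ← pow_mul, ← pow_succ]
    rw [Finset.sum_congr rfl h1]
    -- shift the index
    have h2 := Finset.sum_range_succ' (fun i => b ^ q ^ i) n
    have h3 := Finset.sum_range_succ (fun i => b ^ q ^ i) n
    have h4 : b ^ q ^ n = b ^ q ^ 0 := by rw [hpow_card, pow_zero, pow_one]
    have := h2.symm.trans h3
    simp only [h4] at this
    exact add_right_cancel this
  -- the witness: T (a ^ (1 + q^r)) equals the RHS
  have hwit : ∀ a : F, T (a ^ (1 + q ^ r)) =
      ∑ i ∈ Finset.range (n - r), a ^ ((1 + q ^ r) * q ^ i)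
        + ∑ i ∈ Finset.range r, a ^ ((1 + q ^ (n - r)) * q ^ i) := by
    intro a
    rw [T_apply]
    have hsplit : n = (n - r) + r := (Nat.sub_add_cancel hrn).symm
    have h0 : ∀ i : ℕ, (a ^ (1 + q ^ r)) ^ q ^ i = a ^ ((1 + q ^ r) * q ^ i) := by
      intro i; rw [pow_mul]
    calc ∑ i ∈ Finset.range n, (a ^ (1 + q ^ r)) ^ q ^ i
        = ∑ i ∈ Finset.range ((n - r) + r), a ^ ((1 + q ^ r) * q ^ i) := by
          rw [← hsplit]; exact Finset.sum_congr rfl fun i _ => h0 i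
      _ = ∑ i ∈ Finset.range (n - r), a ^ ((1 + q ^ r) * q ^ i)
            + ∑ j ∈ Finset.range r, a ^ ((1 + q ^ r) * q ^ ((n - r) + j)) :=
          Finset.sum_range_add _ _ _
      _ = ∑ i ∈ Finset.range (n - r), a ^ ((1 + q ^ r) * q ^ i)
            + ∑ j ∈ Finset.range r, a ^ ((1 + q ^ (n - r)) * q ^ j) := by
          congr 1
          apply Finset.sum_congr rfl
          intro j _
          have hx : r + ((n - r) + j) = n + j := by omega
          have e1 : (1 + q ^ r) * q ^ ((n - r) + j) = q ^ ((n - r) + j) + q ^ (n + j) := by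
            rw [add_mul, one_mul, ← pow_add, hx]
          have e2 : (1 + q ^ (n - r)) * q ^ j = q ^ j + q ^ ((n - r) + j) := by
            rw [add_mul, one_mul, ← pow_add]
          have e3 : a ^ q ^ (n + j) = a ^ q ^ j := by
            rw [pow_add, pow_mul, hpow_card]
          rw [e1, e2, pow_add, pow_add, e3, mul_comm]
          exact (pow_add a _ _).symm
  -- fibers of T over attained values all have the kernel's cardinality
  have hfiber : ∀ c : F, (∃ b0 : F, T b0 = c) →
      Nat.card {b : F // T b = c} = Nat.card {b : F // T b = 0} := by
    rintro c ⟨b0, hb0⟩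
    apply Nat.card_congr
    refine ⟨fun x => ⟨x.1 - b0, ?_⟩, fun x => ⟨x.1 + b0, ?_⟩, ?_, ?_⟩
    · rw [map_sub, x.2, hb0, sub_self]
    · rw [map_add, x.2, hb0, zero_add]
    · intro x; ext; simp
    · intro x; ext; simp
  -- kernel cardinality is q^(n-1)
  have hker : Nat.card {b : F // T b = 0} = q ^ (n - 1) := by
    have hcardF : Nat.card F = q ^ n := by rw [Nat.card_eq_fintype_card, hF]
    -- kernel bound via polynomial
    have hkerle : Nat.card {b : F // T b = 0} ≤ q ^ (n - 1) := by
      set P : Polynomial F := ∑ i ∈ Finset.range n, X ^ q ^ i with hP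
      have hPeval : ∀ b : F, Polynomial.eval b P = T b := by
        intro b
        rw [hP, Polynomial.eval_finset_sum, T_apply]
        simp
      have hPne : P ≠ 0 := by
        intro h
        have : P.coeff (q ^ (n - 1)) = 1 := by
          rw [hP, Polynomial.finset_sum_coeff]
          rw [Finset.sum_eq_single (n - 1)]
          · simp [Polynomial.coeff_X_pow]
          · intro i hi hne
            rw [Polynomial.coeff_X_pow, if_neg]
            intro hcontra
            exact hne (Nat.pow_right_injective hq2 hcontra.symm)
          · intro h'; exact absurd (Finset.mem_range.mpr (by omega)) h'
        rw [h] at this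
        simp at this
      have hPdeg : P.natDegree ≤ q ^ (n - 1) := by
        apply Polynomial.natDegree_sum_le_of_forall_le
        intro i hi
        rw [Polynomial.natDegree_X_pow]
        have := Finset.mem_range.mp hi
        exact Nat.pow_le_pow_right hq0 (by omega)
      calc Nat.card {b : F // T b = 0}
          = Nat.card {b : F // Polynomial.eval b P = 0} := by
            apply Nat.card_congr
            exact Equiv.subtypeEquivRight fun b => by rw [hPeval]
        _ ≤ P.natDegree := aux_card_eval_zero_le P hPne
        _ ≤ q ^ (n - 1) := hPdeg
    -- range bound via X^q - X
    have hrangele : Nat.card T.range ≤ q := by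
      set Q : Polynomial F := X ^ q - X with hQ
      have hQne : Q ≠ 0 := by
        intro h
        have : Q.coeff q = 1 := by
          rw [hQ, Polynomial.coeff_sub, Polynomial.coeff_X_pow, Polynomial.coeff_X, if_pos rfl,
            if_neg (by omega)]
          simp
        rw [h] at this
        simp at this
      have hQdeg : Q.natDegree ≤ q := by
        rw [hQ]
        apply le_trans (Polynomial.natDegree_sub_le _ _)
        simp [Polynomial.natDegree_X_pow, Polynomial.natDegree_X]
        omega
      have hsub : (T.range : Set F) ⊆ {x : F | Polynomial.eval x Q = 0} := by
        rintro x ⟨b, rfl⟩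
        simp only [Set.mem_setOf_eq, hQ, Polynomial.eval_sub, Polynomial.eval_pow,
          Polynomial.eval_X]
        rw [hTfix b, sub_self]
      calc Nat.card T.range = Nat.card (T.range : Set F) := rfl
        _ ≤ Nat.card {x : F | Polynomial.eval x Q = 0} :=
            Nat.card_mono (Set.toFinite _) hsub
        _ = Nat.card {x : F // Polynomial.eval x Q = 0} := rfl
        _ ≤ Q.natDegree := aux_card_eval_zero_le Q hQne
        _ ≤ q := hQdeg
    -- first isomorphism theorem counting
    have hprod : Nat.card T.range * Nat.card T.ker = q ^ n := by
      rw [← hcardF, AddSubgroup.card_eq_card_quotient_mul_card_addSubgroup T.ker]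
      congr 1
      exact Nat.card_congr (QuotientAddGroup.quotientKerEquivRange T).toEquiv.symm
    have hkereq : Nat.card {b : F // T b = 0} = Nat.card T.ker := by
      apply Nat.card_congr
      exact Equiv.subtypeEquivRight fun b => by
        rw [AddMonoidHom.mem_ker]
    rw [hkereq]
    have h1 : q ^ n ≤ q * Nat.card T.ker := by
      rw [← hprod]
      exact Nat.mul_le_mul_right _ hrangele
    have h2 : q ^ (n - 1) ≤ Nat.card T.ker := by
      have hqq : q * q ^ (n - 1) = q ^ n := by
        rw [← pow_succ']
        congr 1
        omega
      have : q * q ^ (n - 1) ≤ q * Nat.card T.ker := by rw [hqq]; exact h1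
      exact Nat.le_of_mul_le_mul_left this hq0
    have h3 : Nat.card T.ker ≤ q ^ (n - 1) := by rw [← hkereq]; exact hkerle
    omega
  -- main count
  have hmain : Nat.card {ab : F × F // T ab.2 =
      ∑ i ∈ Finset.range (n - r), ab.1 ^ ((1 + q ^ r) * q ^ i)
        + ∑ i ∈ Finset.range r, ab.1 ^ ((1 + q ^ (n - r)) * q ^ i)} = q ^ (2 * n - 1) := by
    have hsig : Nat.card {ab : F × F // T ab.2 =
        ∑ i ∈ Finset.range (n - r), ab.1 ^ ((1 + q ^ r) * q ^ i)
          + ∑ i ∈ Finset.range r, ab.1 ^ ((1 + q ^ (n - r)) * q ^ i)}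
        = ∑ a : F, Nat.card {b : F // T b =
            ∑ i ∈ Finset.range (n - r), a ^ ((1 + q ^ r) * q ^ i)
              + ∑ i ∈ Finset.range r, a ^ ((1 + q ^ (n - r)) * q ^ i)} := by
      calc Nat.card {ab : F × F // T ab.2 =
            ∑ i ∈ Finset.range (n - r), ab.1 ^ ((1 + q ^ r) * q ^ i)
              + ∑ i ∈ Finset.range r, ab.1 ^ ((1 + q ^ (n - r)) * q ^ i)}
          = Fintype.card {ab : F × F // T ab.2 =
            ∑ i ∈ Finset.range (n - r), ab.1 ^ ((1 + q ^ r) * q ^ i)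
              + ∑ i ∈ Finset.range r, ab.1 ^ ((1 + q ^ (n - r)) * q ^ i)} :=
            Nat.card_eq_fintype_card
        _ = Fintype.card (Σ a : F, {b : F // T b =
            ∑ i ∈ Finset.range (n - r), a ^ ((1 + q ^ r) * q ^ i)
              + ∑ i ∈ Finset.range r, a ^ ((1 + q ^ (n - r)) * q ^ i)}) :=
            Fintype.card_congr ⟨fun x => ⟨x.1.1, x.1.2, x.2⟩,
              fun x => ⟨(x.1, x.2.1), x.2.2⟩, fun x => rfl, fun x => rfl⟩
        _ = ∑ a : F, Fintype.card {b : F // T b =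
            ∑ i ∈ Finset.range (n - r), a ^ ((1 + q ^ r) * q ^ i)
              + ∑ i ∈ Finset.range r, a ^ ((1 + q ^ (n - r)) * q ^ i)} :=
            Fintype.card_sigma
        _ = ∑ a : F, Nat.card {b : F // T b =
            ∑ i ∈ Finset.range (n - r), a ^ ((1 + q ^ r) * q ^ i)
              + ∑ i ∈ Finset.range r, a ^ ((1 + q ^ (n - r)) * q ^ i)} := by
            simp [Nat.card_eq_fintype_card]
    rw [hsig]
    have hconst : ∀ a : F, Nat.card {b : F // T b =
        ∑ i ∈ Finset.range (n - r), a ^ ((1 + q ^ r) * q ^ i)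
          + ∑ i ∈ Finset.range r, a ^ ((1 + q ^ (n - r)) * q ^ i)} = q ^ (n - 1) := by
      intro a
      rw [hfiber _ ⟨a ^ (1 + q ^ r), hwit a⟩, hker]
    rw [Finset.sum_congr rfl fun a _ => hconst a, Finset.sum_const, Finset.card_univ, hF,
      smul_eq_mul, ← pow_add]
    congr 1
    omega
  exact hmain
end

section
/- The complement ℕ ∖ S of S in the natural numbers is a finite set of cardinality exactly q^r(q^{n−1} − 1)/2. -/
/-- One reduction step: split `y*a` using the relation `e*a = c`. -/
private lemma red (e a c : ℕ) (he : 0 < e) (h : e * a = c) (y : ℕ) :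
    ∃ s x, x < e ∧ y * a = s * c + x * a := by
  refine ⟨y / e, y % e, Nat.mod_lt _ he, ?_⟩
  conv_lhs => rw [← Nat.div_add_mod y e]
  rw [← h]; ring

private lemma core (a1 a2 a3 a4 a5 e2 e3 e4 e5 c2 c3 c4 c5 d32 d42 d43 d52 d53 d54 : ℕ)
    (ha1 : 0 < a1)
    (he2 : 0 < e2) (he3 : 0 < e3) (he4 : 0 < e4) (he5 : 0 < e5)
    (hmul : e2 * e3 * e4 * e5 = a1)
    (h2 : e2 * a2 = c2 * a1)
    (h3 : e3 * a3 = c3 * a1 + d32 * a2)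
    (h4 : e4 * a4 = c4 * a1 + d42 * a2 + d43 * a3)
    (h5 : e5 * a5 = c5 * a1 + d52 * a2 + d53 * a3 + d54 * a4)
    (hinj : ∀ x2 x3 x4 x5 y2 y3 y4 y5 : ℕ, x2 < e2 → x3 < e3 → x4 < e4 → x5 < e5 →
      y2 < e2 → y3 < e3 → y4 < e4 → y5 < e5 →
      (x2*a2 + x3*a3 + x4*a4 + x5*a5) % a1 = (y2*a2 + y3*a3 + y4*a4 + y5*a5) % a1 →
      x2 = y2 ∧ x3 = y3 ∧ x4 = y4 ∧ x5 = y5) :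
    {m : ℕ | m ∉ AddSubmonoid.closure ({a1, a2, a3, a4, a5} : Set ℕ)}.Finite ∧
    {m : ℕ | m ∉ AddSubmonoid.closure ({a1, a2, a3, a4, a5} : Set ℕ)}.ncard * 2 + a1
      = (e2-1)*a2 + (e3-1)*a3 + (e4-1)*a4 + (e5-1)*a5 + 1 := by
  classical
  set S := AddSubmonoid.closure ({a1, a2, a3, a4, a5} : Set ℕ) with hSdef
  -- normal form
  have norm : ∀ y1 y2 y3 y4 y5 : ℕ, ∃ k x2 x3 x4 x5 : ℕ,
      x2 < e2 ∧ x3 < e3 ∧ x4 < e4 ∧ x5 < e5 ∧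
      y1*a1 + y2*a2 + y3*a3 + y4*a4 + y5*a5
        = k*a1 + x2*a2 + x3*a3 + x4*a4 + x5*a5 := by
    intro y1 y2 y3 y4 y5
    obtain ⟨s5, x5, hx5, E5⟩ := red e5 a5 _ he5 h5 y5
    obtain ⟨s4, x4, hx4, E4⟩ := red e4 a4 _ he4 h4 (y4 + s5*d54)
    obtain ⟨s3, x3, hx3, E3⟩ := red e3 a3 _ he3 h3 (y3 + s5*d53 + s4*d43)
    obtain ⟨s2, x2, hx2, E2⟩ := red e2 a2 _ he2 h2 (y2 + s5*d52 + s4*d42 + s3*d32)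
    refine ⟨y1 + s5*c5 + s4*c4 + s3*c3 + s2*c2, x2, x3, x4, x5, hx2, hx3, hx4, hx5, ?_⟩
    zify at E5 E4 E3 E2 ⊢
    linear_combination E5 + E4 + E3 + E2
  -- membership of normal forms
  have memS : ∀ k x2 x3 x4 x5 : ℕ, k*a1 + x2*a2 + x3*a3 + x4*a4 + x5*a5 ∈ S := by
    intro k x2 x3 x4 x5
    have m1 : a1 ∈ S := AddSubmonoid.subset_closure (by simp)
    have m2 : a2 ∈ S := AddSubmonoid.subset_closure (by simp)
    have m3 : a3 ∈ S := AddSubmonoid.subset_closure (by simp)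
    have m4 : a4 ∈ S := AddSubmonoid.subset_closure (by simp)
    have m5 : a5 ∈ S := AddSubmonoid.subset_closure (by simp)
    have h : ∀ (c x : ℕ), x ∈ S → c * x ∈ S := by
      intro c x hx
      simpa [nsmul_eq_mul] using S.nsmul_mem hx c
    exact add_mem (add_mem (add_mem (add_mem (h k a1 m1) (h x2 a2 m2)) (h x3 a3 m3))
      (h x4 a4 m4)) (h x5 a5 m5)
  have mem_iff : ∀ m : ℕ, m ∈ S ↔ ∃ k x2 x3 x4 x5 : ℕ,
      x2 < e2 ∧ x3 < e3 ∧ x4 < e4 ∧ x5 < e5 ∧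
      m = k*a1 + x2*a2 + x3*a3 + x4*a4 + x5*a5 := by
    intro m
    constructor
    · intro hm
      refine AddSubmonoid.closure_induction ?_ ?_ ?_ hm
      · intro x hx
        simp only [Set.mem_insert_iff, Set.mem_singleton_iff] at hx
        rcases hx with h | h | h | h | h
        · obtain ⟨k, z2, z3, z4, z5, b2, b3, b4, b5, hE⟩ := norm 1 0 0 0 0
          exact ⟨k, z2, z3, z4, z5, b2, b3, b4, b5, by rw [h, ← hE]; ring⟩
        · obtain ⟨k, z2, z3, z4, z5, b2, b3, b4, b5, hE⟩ := norm 0 1 0 0 0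
          exact ⟨k, z2, z3, z4, z5, b2, b3, b4, b5, by rw [h, ← hE]; ring⟩
        · obtain ⟨k, z2, z3, z4, z5, b2, b3, b4, b5, hE⟩ := norm 0 0 1 0 0
          exact ⟨k, z2, z3, z4, z5, b2, b3, b4, b5, by rw [h, ← hE]; ring⟩
        · obtain ⟨k, z2, z3, z4, z5, b2, b3, b4, b5, hE⟩ := norm 0 0 0 1 0
          exact ⟨k, z2, z3, z4, z5, b2, b3, b4, b5, by rw [h, ← hE]; ring⟩
        · obtain ⟨k, z2, z3, z4, z5, b2, b3, b4, b5, hE⟩ := norm 0 0 0 0 1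
          exact ⟨k, z2, z3, z4, z5, b2, b3, b4, b5, by rw [h, ← hE]; ring⟩
      · exact ⟨0, 0, 0, 0, 0, he2, he3, he4, he5, by ring⟩
      · rintro x y hx hy ⟨k, x2, x3, x4, x5, b2, b3, b4, b5, hEx⟩
          ⟨l, y2, y3, y4, y5, c2', c3', c4', c5', hEy⟩
        obtain ⟨K, z2, z3, z4, z5, g2, g3, g4, g5, hE⟩ :=
          norm (k + l) (x2 + y2) (x3 + y3) (x4 + y4) (x5 + y5)
        refine ⟨K, z2, z3, z4, z5, g2, g3, g4, g5, ?_⟩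
        rw [hEx, hEy, ← hE]; ring
    · rintro ⟨k, x2, x3, x4, x5, _, _, _, _, hE⟩
      rw [hE]; exact memS k x2 x3 x4 x5
  -- the box and surjectivity of residues
  set ψ : ℕ × ℕ × ℕ × ℕ → ℕ :=
    fun x => x.1*a2 + x.2.1*a3 + x.2.2.1*a4 + x.2.2.2*a5 with hψ
  set box : Finset (ℕ × ℕ × ℕ × ℕ) :=
    Finset.range e2 ×ˢ Finset.range e3 ×ˢ Finset.range e4 ×ˢ Finset.range e5 with hbox
  have memb : ∀ x : ℕ × ℕ × ℕ × ℕ, x ∈ box ↔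
      x.1 < e2 ∧ x.2.1 < e3 ∧ x.2.2.1 < e4 ∧ x.2.2.2 < e5 := by
    intro x
    simp [hbox, Finset.mem_product]
  have hcardbox : box.card = a1 := by
    rw [hbox]
    simp only [Finset.card_product, Finset.card_range]
    rw [← hmul]; ring
  have himg : box.image (fun x => ψ x % a1) = Finset.range a1 := by
    apply Finset.eq_of_subset_of_card_le
    · intro c hc
      simp only [Finset.mem_image] at hc
      obtain ⟨x, _, hx⟩ := hc
      exact Finset.mem_range.2 (hx ▸ Nat.mod_lt _ ha1)
    · rw [Finset.card_range, Finset.card_image_of_injOn, hcardbox]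
      intro x hx y hy hxy
      rw [Finset.mem_coe, memb] at hx
      rw [Finset.mem_coe, memb] at hy
      obtain ⟨u1, u2, u3, u4⟩ :=
        hinj x.1 x.2.1 x.2.2.1 x.2.2.2 y.1 y.2.1 y.2.2.1 y.2.2.2
          hx.1 hx.2.1 hx.2.2.1 hx.2.2.2 hy.1 hy.2.1 hy.2.2.1 hy.2.2.2 hxy
      exact Prod.ext u1 (Prod.ext u2 (Prod.ext u3 u4))
  have surj : ∀ c, c < a1 → ∃ x, x ∈ box ∧ ψ x % a1 = c := by
    intro c hc
    have : c ∈ Finset.range a1 := Finset.mem_range.2 hc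
    rw [← himg] at this
    simpa using this
  set W : ℕ := (e2-1)*a2 + (e3-1)*a3 + (e4-1)*a4 + (e5-1)*a5 with hW
  have hψle : ∀ x, x ∈ box → ψ x ≤ W := by
    intro x hx
    rw [memb] at hx
    have l2 : x.1 * a2 ≤ (e2-1) * a2 := Nat.mul_le_mul_right _ (by omega)
    have l3 : x.2.1 * a3 ≤ (e3-1) * a3 := Nat.mul_le_mul_right _ (by omega)
    have l4 : x.2.2.1 * a4 ≤ (e4-1) * a4 := Nat.mul_le_mul_right _ (by omega)
    have l5 : x.2.2.2 * a5 ≤ (e5-1) * a5 := Nat.mul_le_mul_right _ (by omega)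
    calc ψ x = x.1*a2 + x.2.1*a3 + x.2.2.1*a4 + x.2.2.2*a5 := rfl
      _ ≤ W := by rw [hW]; omega
  have hWa1 : a1 ≤ W + 1 := by
    obtain ⟨x, hxb, hxm⟩ := surj (a1 - 1) (by omega)
    have h1 : a1 - 1 ≤ ψ x := hxm ▸ Nat.mod_le _ _
    have h2 := hψle x hxb
    omega
  -- the gap characterization
  have gap_iff : ∀ m : ℕ, m ∉ S ↔ ∃ s, s ∈ S ∧ m + a1 + s = W := by
    intro m
    constructor
    · intro hm
      obtain ⟨x, hxb, hxm⟩ := surj (m % a1) (Nat.mod_lt _ ha1)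
      have hxbb := (memb x).1 hxb
      have hlt : m < ψ x := by
        by_contra hle
        push_neg at hle
        apply hm
        have hdvd : a1 ∣ m - ψ x := by
          have : ψ x ≡ m [MOD a1] := hxm
          exact (Nat.modEq_iff_dvd' hle).1 this
        obtain ⟨j, hj⟩ := hdvd
        have hmeq : m = a1 * j + ψ x := by
          rw [← hj]; omega
        rw [mem_iff]
        refine ⟨j, x.1, x.2.1, x.2.2.1, x.2.2.2, hxbb.1, hxbb.2.1, hxbb.2.2.1, hxbb.2.2.2, ?_⟩
        rw [hmeq]; simp only [hψ]; ring
      have hdvd : a1 ∣ ψ x - m := by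
        have : m ≡ ψ x [MOD a1] := hxm.symm
        exact (Nat.modEq_iff_dvd' hlt.le).1 this
      obtain ⟨u, hu⟩ := hdvd
      have hψm' : ψ x = a1 * u + m := by omega
      have hu0 : u ≠ 0 := by rintro rfl; simp at hψm'; omega
      obtain ⟨w, rfl⟩ := Nat.exists_eq_succ_of_ne_zero hu0
      have hψm : ψ x = a1 * (w + 1) + m := hψm'
      set b2 := e2 - 1 - x.1 with hb2'
      set b3 := e3 - 1 - x.2.1 with hb3'
      set b4 := e4 - 1 - x.2.2.1 with hb4'
      set b5 := e5 - 1 - x.2.2.2 with hb5'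
      have hc2 : e2 - 1 = x.1 + b2 := by omega
      have hc3 : e3 - 1 = x.2.1 + b3 := by omega
      have hc4 : e4 - 1 = x.2.2.1 + b4 := by omega
      have hc5 : e5 - 1 = x.2.2.2 + b5 := by omega
      have hsum : ψ x + (b2*a2 + b3*a3 + b4*a4 + b5*a5) = W := by
        simp only [hψ]
        rw [hW, hc2, hc3, hc4, hc5]; ring
      refine ⟨w*a1 + b2*a2 + b3*a3 + b4*a4 + b5*a5, memS w b2 b3 b4 b5, ?_⟩
      zify at hψm hsum ⊢
      linear_combination hsum - hψm
    · rintro ⟨s, hs, hsum⟩ hmS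
      rw [mem_iff] at hmS hs
      obtain ⟨k, x2, x3, x4, x5, _, _, _, _, hEx⟩ := hmS
      obtain ⟨l, y2, y3, y4, y5, _, _, _, _, hEy⟩ := hs
      obtain ⟨K, z2, z3, z4, z5, g2, g3, g4, g5, hE⟩ :=
        norm 0 (x2 + y2) (x3 + y3) (x4 + y4) (x5 + y5)
      have hWrep : W = (z2*a2 + z3*a3 + z4*a4 + z5*a5) + (k + l + 1 + K)*a1 := by
        zify at hEx hEy hE hsum ⊢
        linear_combination hEx + hEy + hE - hsum
      have hres : (z2*a2 + z3*a3 + z4*a4 + z5*a5) % a1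
          = ((e2-1)*a2 + (e3-1)*a3 + (e4-1)*a4 + (e5-1)*a5) % a1 := by
        conv_rhs => rw [← hW, hWrep]
        rw [Nat.add_mul_mod_self_right]
      obtain ⟨u1, u2, u3, u4⟩ := hinj z2 z3 z4 z5 (e2-1) (e3-1) (e4-1) (e5-1)
        g2 g3 g4 g5 (by omega) (by omega) (by omega) (by omega) hres
      have hzW : z2*a2 + z3*a3 + z4*a4 + z5*a5 = W := by rw [u1, u2, u3, u4, hW]
      rw [hzW] at hWrep
      have h0 : (k + l + 1 + K) * a1 = 0 := by omega
      rcases Nat.mul_eq_zero.1 h0 with h | h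
      · omega
      · omega
  -- counting
  set N := W + 1 - a1 with hN
  have gap_lt : ∀ m : ℕ, m ∉ S → m < N := by
    intro m hm
    obtain ⟨s, _, hE⟩ := (gap_iff m).1 hm
    omega
  have key : ∀ m : ℕ, m < N → (m ∉ S ↔ N - 1 - m ∈ S) := by
    intro m hmN
    constructor
    · intro hm
      obtain ⟨s, hs, hE⟩ := (gap_iff m).1 hm
      have : s = N - 1 - m := by omega
      exact this ▸ hs
    · intro hs
      exact (gap_iff m).2 ⟨N - 1 - m, hs, by omega⟩
  set Gf : Finset ℕ := (Finset.range N).filter (fun m => m ∉ S) with hGf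
  set Sf : Finset ℕ := (Finset.range N).filter (fun m => m ∈ S) with hSf
  have hGset : {m : ℕ | m ∉ S} = ↑Gf := by
    ext m
    simp only [Set.mem_setOf_eq, hGf, Finset.coe_filter, Finset.mem_range, Set.mem_setOf_eq]
    exact ⟨fun h => ⟨gap_lt m h, h⟩, fun h => h.2⟩
  have hsplit : Sf.card + Gf.card = N := by
    rw [hSf, hGf, Finset.card_filter_add_card_filter_not, Finset.card_range]
  have hbij : Gf.card = Sf.card := by
    apply Finset.card_bij (fun m _ => N - 1 - m)
    · intro m hm
      rw [hGf, Finset.mem_filter, Finset.mem_range] at hm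
      rw [hSf, Finset.mem_filter, Finset.mem_range]
      exact ⟨by omega, (key m hm.1).1 hm.2⟩
    · intro m hm m' hm' hE
      rw [hGf, Finset.mem_filter, Finset.mem_range] at hm hm'
      omega
    · intro s hs
      rw [hSf, Finset.mem_filter, Finset.mem_range] at hs
      refine ⟨N - 1 - s, ?_, by omega⟩
      rw [hGf, Finset.mem_filter, Finset.mem_range]
      refine ⟨by omega, ?_⟩
      have hkey := key (N - 1 - s) (by omega)
      rw [show N - 1 - (N - 1 - s) = s by omega] at hkey
      exact hkey.2 hs.2
  constructor
  · rw [hGset]; exact Gf.finite_toSet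
  · rw [hGset, Set.ncard_coe_finset]
    omega

private lemma digits_inj (q t v : ℕ) (hq : 2 ≤ q) :
    ∀ x2 x3 x4 x5 y2 y3 y4 y5 : ℕ, x2 < q^(t+1) → x3 < q^v → x4 < q → x5 < q^t →
      y2 < q^(t+1) → y3 < q^v → y4 < q → y5 < q^t →
      (x2*(q^(2*t+v+2)+q^(t+v+1)) + x3*(q^(2*t+v+3)+q^(t+1)) + x4*(q^(2*t+2*v+3)+q^t)
        + x5*(q^(2*t+2*v+4)-q^(2*t+v+3)+q^(t+v+2)+1)) % q^(2*t+v+2)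
      = (y2*(q^(2*t+v+2)+q^(t+v+1)) + y3*(q^(2*t+v+3)+q^(t+1)) + y4*(q^(2*t+2*v+3)+q^t)
        + y5*(q^(2*t+2*v+4)-q^(2*t+v+3)+q^(t+v+2)+1)) % q^(2*t+v+2) →
      x2 = y2 ∧ x3 = y3 ∧ x4 = y4 ∧ x5 = y5 := by
  have hq0 : 0 < q := by omega
  have hsub : q^(2*t+v+3) ≤ q^(2*t+2*v+4) := Nat.pow_le_pow_right hq0 (by omega)
  -- rewrite each combination as  a1 * M + R
  have hdecomp : ∀ x2 x3 x4 x5 : ℕ,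
      x2*(q^(2*t+v+2)+q^(t+v+1)) + x3*(q^(2*t+v+3)+q^(t+1)) + x4*(q^(2*t+2*v+3)+q^t)
        + x5*(q^(2*t+2*v+4)-q^(2*t+v+3)+q^(t+v+2)+1)
      = q^(2*t+v+2) * (x2 + x3*q + x4*q^(v+1) + x5*(q^(v+2)-q))
        + (q^t * (x2*q^(v+1) + x3*q + x4 + x5*q^(v+2)) + x5) := by
    intro x2 x3 x4 x5
    have hsub2 : q ≤ q^(v+2) := Nat.le_self_pow (by omega) q
    zify [hsub, hsub2]
    ring
  intro x2 x3 x4 x5 y2 y3 y4 y5 hx2 hx3 hx4 hx5 hy2 hy3 hy4 hy5 h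
  rw [hdecomp x2 x3 x4 x5, hdecomp y2 y3 y4 y5, Nat.mul_add_mod, Nat.mul_add_mod] at h
  -- Step 1 : x5 = y5
  have h5 : x5 = y5 := by
    have hdvd : q^t ∣ q^(2*t+v+2) := pow_dvd_pow q (by omega)
    have h' := congrArg (· % q^t) h
    simp only [Nat.mod_mod_of_dvd _ hdvd] at h'
    rwa [Nat.mul_add_mod, Nat.mul_add_mod, Nat.mod_eq_of_lt hx5, Nat.mod_eq_of_lt hy5] at h'
  subst h5
  -- Step 2 : cancel x5, divide by q^t
  have h2' : (x2*q^(v+1) + x3*q + x4) % q^(t+v+2) = (y2*q^(v+1) + y3*q + y4) % q^(t+v+2) := by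
    have hme : q^t * (x2*q^(v+1) + x3*q + x4 + x5*q^(v+2))
        ≡ q^t * (y2*q^(v+1) + y3*q + y4 + x5*q^(v+2)) [MOD q^(2*t+v+2)] :=
      Nat.ModEq.add_right_cancel' x5 h
    have hsplit : (2*t+v+2) = t + (t+v+2) := by omega
    rw [hsplit, pow_add] at hme
    unfold Nat.ModEq at hme
    rw [Nat.mul_mod_mul_left, Nat.mul_mod_mul_left] at hme
    have := Nat.eq_of_mul_eq_mul_left (pow_pos hq0 t) hme
    have hcan : (x2*q^(v+1) + x3*q + x4) + x5*q^(v+2)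
        ≡ (y2*q^(v+1) + y3*q + y4) + x5*q^(v+2) [MOD q^(t+v+2)] := by
      unfold Nat.ModEq
      convert this using 2 <;> ring
    exact Nat.ModEq.add_right_cancel' _ hcan
  have hbound : ∀ x2 x3 x4 : ℕ, x2 < q^(t+1) → x3 < q^v → x4 < q →
      x2*q^(v+1) + x3*q + x4 < q^(t+v+2) := by
    intro a b c ha hb hc
    have l1 : (a+1) * q^(v+1) ≤ q^(t+1) * q^(v+1) := Nat.mul_le_mul_right _ ha
    have l2 : (b+1) * q ≤ q^v * q := Nat.mul_le_mul_right _ hb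
    have e1 : q^(t+1) * q^(v+1) = q^(t+v+2) := by ring
    have e2 : q^v * q = q^(v+1) := by ring
    nlinarith [l1, l2, hc]
  have hE : x2*q^(v+1) + x3*q + x4 = y2*q^(v+1) + y3*q + y4 := by
    rwa [Nat.mod_eq_of_lt (hbound _ _ _ hx2 hx3 hx4),
      Nat.mod_eq_of_lt (hbound _ _ _ hy2 hy3 hy4)] at h2'
  -- Step 3 : peel off digits
  have hE' : x4 + (x2*q^v + x3)*q = y4 + (y2*q^v + y3)*q := by
    zify at hE ⊢; linear_combination hE
  have h4 : x4 = y4 := by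
    have := congrArg (· % q) hE'
    simpa [Nat.add_mul_mod_self_right, Nat.mod_eq_of_lt hx4, Nat.mod_eq_of_lt hy4] using this
  subst h4
  have hE2 : x2*q^v + x3 = y2*q^v + y3 :=
    Nat.eq_of_mul_eq_mul_right hq0 (by omega)
  have hE2' : x3 + x2*q^v = y3 + y2*q^v := by omega
  have h3 : x3 = y3 := by
    have := congrArg (· % q^v) hE2'
    simpa [Nat.add_mul_mod_self_right, Nat.mod_eq_of_lt hx3, Nat.mod_eq_of_lt hy3] using this
  subst h3
  have h2 : x2 = y2 :=
    Nat.eq_of_mul_eq_mul_right (pow_pos hq0 v) (by omega)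
  exact ⟨h2, rfl, rfl, rfl⟩

/-- Let `S ⊆ ℕ` be the additive submonoid generated by `a₁ = q^{n−1}`,
`a₂ = q^{n−1}+q^{r−1}`, `a₃ = q^n+q^{n−r}`, `a₄ = q^{2r−1}+q^{n−r−1}`,
`a₅ = q^{2r}−q^n+q^r+1`. Then the complement `ℕ ∖ S` is a finite set of
cardinality exactly `q^r(q^{n−1} − 1)/2`. -/
theorem stmt4 (p e q n r : ℕ) (hp : p.Prime) (he : 0 < e) (hq : q = p ^ e)
    (hn : 2 ≤ n) (hr1 : (n + 1) / 2 ≤ r) (hr2 : r ≤ n - 1) (hgcd : Nat.gcd n r = 1)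
    (S : AddSubmonoid ℕ)
    (hS : S = AddSubmonoid.closure
      {q ^ (n - 1), q ^ (n - 1) + q ^ (r - 1), q ^ n + q ^ (n - r),
        q ^ (2 * r - 1) + q ^ (n - r - 1), q ^ (2 * r) - q ^ n + q ^ r + 1}) :
    {m : ℕ | m ∉ S}.Finite ∧ {m : ℕ | m ∉ S}.ncard = q ^ r * (q ^ (n - 1) - 1) / 2 := by
  have hq2 : 2 ≤ q := by
    rw [hq]
    calc 2 ≤ p := hp.two_le
    _ ≤ p ^ e := Nat.le_self_pow (by omega) p
  have hq0 : 0 < q := by omega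
  subst hS
  by_cases hn2 : n = 2
  · subst hn2
    have hr : r = 1 := by omega
    subst hr
    norm_num
    have hset : ({q, q^2+q, q+1} : Set ℕ) = {q, q^2+q, q+1, q+1, q+1} := by
      ext x; simp
    rw [hset]
    have key := core q (q^2+q) (q+1) (q+1) (q+1) 1 q 1 1
      (q+1) (q+1) 0 0 0 0 1 0 0 1
      hq0 one_pos hq0 one_pos one_pos
      (by ring) (by ring) (by ring) (by ring) (by ring)
      ?_
    · refine ⟨key.1, ?_⟩
      have hcard := key.2
      have key2 : {m : ℕ | m ∉ AddSubmonoid.closure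
          ({q, q^2+q, q+1, q+1, q+1} : Set ℕ)}.ncard * 2 = q * (q - 1) := by
        zify [show 1 ≤ q by omega] at hcard ⊢
        linear_combination hcard
      rw [← key2]
      omega
    · intro x2 x3 x4 x5 y2 y3 y4 y5 hx2 hx3 hx4 hx5 hy2 hy3 hy4 hy5 h
      have hx20 : x2 = 0 := by omega
      have hx40 : x4 = 0 := by omega
      have hx50 : x5 = 0 := by omega
      have hy20 : y2 = 0 := by omega
      have hy40 : y4 = 0 := by omega
      have hy50 : y5 = 0 := by omega
      subst hx20 hx40 hx50 hy20 hy40 hy50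
      simp only [zero_mul, zero_add, add_zero] at h
      rw [show x3*(q+1) = x3 + x3*q from by ring, show y3*(q+1) = y3 + y3*q from by ring,
        Nat.add_mul_mod_self_right, Nat.add_mul_mod_self_right,
        Nat.mod_eq_of_lt hx3, Nat.mod_eq_of_lt hy3] at h
      exact ⟨rfl, h, rfl, rfl⟩
  · have hn3 : 3 ≤ n := by omega
    have h2r : n + 1 ≤ 2 * r := by
      rcases Nat.lt_or_ge (2 * r) (n + 1) with h | h
      · exfalso
        have hrn : 2 * r = n := by omega
        have : Nat.gcd n r = r := Nat.gcd_eq_right ⟨2, by omega⟩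
        omega
      · exact h
    obtain ⟨t, v, hn', hr'⟩ : ∃ t v : ℕ, n = 2*t+v+3 ∧ r = t+v+2 :=
      ⟨n - r - 1, 2*r - n - 1, by omega, by omega⟩
    subst hr'; subst hn'
    simp only [show 2*t+v+3-1 = 2*t+v+2 from by omega, show t+v+2-1 = t+v+1 from by omega,
      show 2*t+v+3-(t+v+2) = t+1 from by omega, show t+1-1 = t from by omega,
      show 2*(t+v+2) = 2*t+2*v+4 from by omega, show 2*t+2*v+4-1 = 2*t+2*v+3 from by omega]
    have hsub : q^(2*t+v+3) ≤ q^(2*t+2*v+4) := Nat.pow_le_pow_right hq0 (by omega)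
    have hA2 : 2 ≤ q^(t+1) := le_trans hq2 (Nat.le_self_pow (by omega) q)
    have hB2 : 2 ≤ q^(v+1) := le_trans hq2 (Nat.le_self_pow (by omega) q)
    have hprodeq : q^(t+1) * q^(v+1) = q^(t+v+2) := by ring
    have keyineq : q^(t+1) + q^(v+1) ≤ 1 + q^(t+v+2) := by nlinarith [hA2, hB2, hprodeq]
    have i1 : q^(t+1) ≤ 1 + q^(t+v+2) := by omega
    have i2 : q^(v+1) ≤ 1 + q^(t+v+2) - q^(t+1) := by omega
    have key := core (q^(2*t+v+2)) (q^(2*t+v+2)+q^(t+v+1)) (q^(2*t+v+3)+q^(t+1))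
      (q^(2*t+2*v+3)+q^t) (q^(2*t+2*v+4)-q^(2*t+v+3)+q^(t+v+2)+1)
      (q^(t+1)) (q^v) q (q^t)
      (q^(t+1)+1) (q^(v+1)-1) (q^(v+2)-q) (1+q^(t+v+2)-q^(t+1)-q^(v+1))
      1 0 1 0 0 1
      (pow_pos hq0 _) (pow_pos hq0 _) (pow_pos hq0 _)
      hq0 (pow_pos hq0 _)
      (by ring)
      (by ring)
      (by zify [show 1 ≤ q^(v+1) by omega]; ring)
      (by zify [show q ≤ q^(v+2) from Nat.le_self_pow (by omega) q]; ring)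
      (by zify [hsub, i1, i2]; ring)
      (digits_inj q t v hq2)
    refine ⟨key.1, ?_⟩
    have hcard := key.2
    have key2 : {m : ℕ | m ∉ AddSubmonoid.closure
        ({q^(2*t+v+2), q^(2*t+v+2)+q^(t+v+1), q^(2*t+v+3)+q^(t+1), q^(2*t+2*v+3)+q^t,
          q^(2*t+2*v+4)-q^(2*t+v+3)+q^(t+v+2)+1} : Set ℕ)}.ncard * 2
        = q^(t+v+2) * (q^(2*t+v+2) - 1) := by
      zify [show 1 ≤ q^(t+1) by omega, show 1 ≤ q^v from Nat.one_le_pow _ _ hq0,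
        show 1 ≤ q by omega, show 1 ≤ q^t from Nat.one_le_pow _ _ hq0,
        show 1 ≤ q^(2*t+v+2) from Nat.one_le_pow _ _ hq0, hsub] at hcard ⊢
      linear_combination hcard
    rw [← key2]
    omega
end

section
/- Write 2g − 1 = q^r(q^{n−1} − 1) − 1. Then: (i) every natural number m ≥ q^r(q^{n−1} − 1) belongs to S; (ii) 2g − 1 = q^r(q^{n−1} − 1) − 1 does not belong to S (so it is the largest gap of S); and (iii) S is symmetric, i.e., for every natural number m with m ≤ 2g − 1, m ∈ S if and only if (2g − 1) − m ∉ S. -/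
/-- membership in the closure of a 5-element set of naturals -/
lemma mem_closure5 {g1 g2 g3 g4 g5 m : ℕ} :
    m ∈ AddSubmonoid.closure ({g1, g2, g3, g4, g5} : Set ℕ) ↔
      ∃ z1 z2 z3 z4 z5 : ℕ, m = z1*g1 + z2*g2 + z3*g3 + z4*g4 + z5*g5 := by
  constructor
  · intro hm
    induction hm using AddSubmonoid.closure_induction with
    | mem x hx =>
      simp only [Set.mem_insert_iff, Set.mem_singleton_iff] at hx
      rcases hx with h|h|h|h|h
      · exact ⟨1,0,0,0,0, by simp [h]⟩
      · exact ⟨0,1,0,0,0, by simp [h]⟩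
      · exact ⟨0,0,1,0,0, by simp [h]⟩
      · exact ⟨0,0,0,1,0, by simp [h]⟩
      · exact ⟨0,0,0,0,1, by simp [h]⟩
    | zero => exact ⟨0,0,0,0,0, by simp⟩
    | add x y _ _ hx hy =>
      obtain ⟨a1,a2,a3,a4,a5,ha⟩ := hx
      obtain ⟨b1,b2,b3,b4,b5,hb⟩ := hy
      exact ⟨a1+b1,a2+b2,a3+b3,a4+b4,a5+b5, by subst ha hb; ring⟩
  · rintro ⟨z1,z2,z3,z4,z5,rfl⟩
    have h : ∀ g ∈ ({g1,g2,g3,g4,g5} : Set ℕ), ∀ z : ℕ, z*g ∈ AddSubmonoid.closure ({g1,g2,g3,g4,g5} : Set ℕ) := by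
      intro g hg z
      simpa [nsmul_eq_mul] using AddSubmonoid.nsmul_mem _ (AddSubmonoid.subset_closure hg) z
    apply AddSubmonoid.add_mem; apply AddSubmonoid.add_mem; apply AddSubmonoid.add_mem
    apply AddSubmonoid.add_mem
    · exact h g1 (by simp) z1
    · exact h g2 (by simp) z2
    · exact h g3 (by simp) z3
    · exact h g4 (by simp) z4
    · exact h g5 (by simp) z5


section Abstract
variable (g1 g2 g3 g4 g5 c2 c3 c4 c5 : ℕ)

/-- normal-form predicate -/
abbrev Rep5 (m : ℕ) : Prop := ∃ z1 z2 z3 z4 z5 : ℕ, m = z1*g1 + z2*g2 + z3*g3 + z4*g4 + z5*g5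

lemma normalize5
    (hc2 : 0 < c2) (hc3 : 0 < c3) (hc4 : 0 < c4) (hc5 : 0 < c5)
    (R2 : ∃ k, c2*g2 = k*g1)
    (R3 : ∃ k l, c3*g3 = k*g1 + l*g2)
    (R4 : ∃ k l mm, c4*g4 = k*g1 + l*g2 + mm*g3)
    (R5 : ∃ k l mm pp, c5*g5 = k*g1 + l*g2 + mm*g3 + pp*g4)
    {m : ℕ} (hm : Rep5 g1 g2 g3 g4 g5 m) :
    ∃ x1 x2 x3 x4 x5 : ℕ, x2 < c2 ∧ x3 < c3 ∧ x4 < c4 ∧ x5 < c5 ∧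
      m = x1*g1 + x2*g2 + x3*g3 + x4*g4 + x5*g5 := by
  obtain ⟨z1,z2,z3,z4,z5,hz⟩ := hm
  obtain ⟨k5,l5,m5,p5,hR5⟩ := R5
  obtain ⟨k4,l4,m4,hR4⟩ := R4
  obtain ⟨k3,l3,hR3⟩ := R3
  obtain ⟨k2,hR2⟩ := R2
  -- step 5
  have h5 : z5*g5 = (z5/c5)*(c5*g5) + (z5 % c5)*g5 := by
    conv_lhs => rw [← Nat.div_add_mod z5 c5]
    ring
  rw [hR5] at h5
  -- step 4
  set w4 := z4 + (z5/c5)*p5 with hw4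
  have h4 : w4*g4 = (w4/c4)*(c4*g4) + (w4 % c4)*g4 := by
    conv_lhs => rw [← Nat.div_add_mod w4 c4]
    ring
  rw [hR4] at h4
  set w3 := z3 + (z5/c5)*m5 + (w4/c4)*m4 with hw3
  have h3 : w3*g3 = (w3/c3)*(c3*g3) + (w3 % c3)*g3 := by
    conv_lhs => rw [← Nat.div_add_mod w3 c3]
    ring
  rw [hR3] at h3
  set w2 := z2 + (z5/c5)*l5 + (w4/c4)*l4 + (w3/c3)*l3 with hw2
  have h2 : w2*g2 = (w2/c2)*(c2*g2) + (w2 % c2)*g2 := by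
    conv_lhs => rw [← Nat.div_add_mod w2 c2]
    ring
  rw [hR2] at h2
  refine ⟨z1 + (z5/c5)*k5 + (w4/c4)*k4 + (w3/c3)*k3 + (w2/c2)*k2,
    w2 % c2, w3 % c3, w4 % c4, z5 % c5,
    Nat.mod_lt _ hc2, Nat.mod_lt _ hc3, Nat.mod_lt _ hc4, Nat.mod_lt _ hc5, ?_⟩
  have e5 : m = z1*g1 + z2*g2 + z3*g3 + w4*g4 + (z5/c5)*(k5*g1 + l5*g2 + m5*g3) + (z5 % c5)*g5 := by
    rw [hz, h5, hw4]; ring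
  have e4 : m = z1*g1 + z2*g2 + w3*g3 + (z5/c5)*(k5*g1 + l5*g2) + (w4/c4)*(k4*g1 + l4*g2)
      + (w4 % c4)*g4 + (z5 % c5)*g5 := by
    rw [e5, h4, hw3]; ring
  have e3 : m = z1*g1 + w2*g2 + (z5/c5)*(k5*g1) + (w4/c4)*(k4*g1) + (w3/c3)*(k3*g1)
      + (w3 % c3)*g3 + (w4 % c4)*g4 + (z5 % c5)*g5 := by
    rw [e4, h3, hw2]; ring
  rw [e3, h2]; ring

lemma abstract5 (G : ℕ)
    (hg1 : 0 < g1)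
    (hcard : c2*c3*c4*c5 = g1)
    (R2 : ∃ k, c2*g2 = k*g1)
    (R3 : ∃ k l, c3*g3 = k*g1 + l*g2)
    (R4 : ∃ k l mm, c4*g4 = k*g1 + l*g2 + mm*g3)
    (R5 : ∃ k l mm pp, c5*g5 = k*g1 + l*g2 + mm*g3 + pp*g4)
    (hG : G = (c2-1)*g2 + (c3-1)*g3 + (c4-1)*g4 + (c5-1)*g5)
    (U : ∀ x1 x2 x3 x4 x5 y1 y2 y3 y4 y5 : ℕ,
      x2 < c2 → x3 < c3 → x4 < c4 → x5 < c5 →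
      y2 < c2 → y3 < c3 → y4 < c4 → y5 < c5 →
      x1*g1 + x2*g2 + x3*g3 + x4*g4 + x5*g5 = y1*g1 + y2*g2 + y3*g3 + y4*g4 + y5*g5 →
      x1 = y1 ∧ x2 = y2 ∧ x3 = y3 ∧ x4 = y4 ∧ x5 = y5) :
    (∀ m, G < m + g1 → Rep5 g1 g2 g3 g4 g5 m) ∧
    (∀ m, m + g1 = G → ¬ Rep5 g1 g2 g3 g4 g5 m) ∧
    (∀ m m', m + m' + g1 = G → (Rep5 g1 g2 g3 g4 g5 m ↔ ¬ Rep5 g1 g2 g3 g4 g5 m')) := by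
  have hc2 : 0 < c2 := Nat.pos_of_ne_zero (by rintro rfl; simp at hcard; omega)
  have hc3 : 0 < c3 := Nat.pos_of_ne_zero (by rintro rfl; simp at hcard; omega)
  have hc4 : 0 < c4 := Nat.pos_of_ne_zero (by rintro rfl; simp at hcard; omega)
  have hc5 : 0 < c5 := Nat.pos_of_ne_zero (by rintro rfl; simp at hcard; omega)
  have hnorm := fun {m} hm => normalize5 g1 g2 g3 g4 g5 c2 c3 c4 c5 hc2 hc3 hc4 hc5 R2 R3 R4 R5 (m := m) hm
  have hmax : ∀ x2 x3 x4 x5 : ℕ, x2 < c2 → x3 < c3 → x4 < c4 → x5 < c5 →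
      x2*g2 + x3*g3 + x4*g4 + x5*g5 ≤ G := by
    intro x2 x3 x4 x5 h2 h3 h4 h5
    rw [hG]
    have key : ∀ x c g : ℕ, x < c → x*g ≤ (c-1)*g := fun x c g h =>
      Nat.mul_le_mul_right g (by omega)
    exact Nat.add_le_add (Nat.add_le_add (Nat.add_le_add (key _ _ _ h2) (key _ _ _ h3))
      (key _ _ _ h4)) (key _ _ _ h5)
  have hcompl : ∀ x2 x3 x4 x5 : ℕ, x2 < c2 → x3 < c3 → x4 < c4 → x5 < c5 →
      (c2-1-x2)*g2 + (c3-1-x3)*g3 + (c4-1-x4)*g4 + (c5-1-x5)*g5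
        + (x2*g2 + x3*g3 + x4*g4 + x5*g5) = G := by
    intro x2 x3 x4 x5 h2 h3 h4 h5
    rw [hG]
    have key : ∀ x c g : ℕ, x < c → (c-1-x)*g + x*g = (c-1)*g := by
      intro x c g h
      rw [← Nat.add_mul]
      congr 1
      omega
    rw [← key x2 c2 g2 h2, ← key x3 c3 g3 h3, ← key x4 c4 g4 h4, ← key x5 c5 g5 h5]
    ring
  haveI : NeZero g1 := ⟨by omega⟩
  have hsurj : ∀ m : ℕ, ∃ x2 x3 x4 x5 j k : ℕ, x2 < c2 ∧ x3 < c3 ∧ x4 < c4 ∧ x5 < c5 ∧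
      m + j*g1 = x2*g2 + x3*g3 + x4*g4 + x5*g5 + k*g1 := by
    have hinj : Function.Injective (fun v : Fin c2 × Fin c3 × Fin c4 × Fin c5 =>
        ((v.1*g2 + v.2.1*g3 + v.2.2.1*g4 + v.2.2.2*g5 : ℕ) : ZMod g1)) := by
      rintro ⟨x2,x3,x4,x5⟩ ⟨y2,y3,y4,y5⟩ hxy
      simp only at hxy
      rw [ZMod.natCast_eq_natCast_iff] at hxy
      have hxy' : ((x2:ℕ)*g2 + x3*g3 + x4*g4 + x5*g5) % g1
          = ((y2:ℕ)*g2 + y3*g3 + y4*g4 + y5*g5) % g1 := hxy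
      obtain ⟨dX, hdX⟩ : ∃ d, ((x2:ℕ)*g2 + x3*g3 + x4*g4 + x5*g5)
          = d*g1 + ((x2:ℕ)*g2 + x3*g3 + x4*g4 + x5*g5) % g1 :=
        ⟨_, (Nat.div_add_mod' _ _).symm⟩
      obtain ⟨dY, hdY⟩ : ∃ d, ((y2:ℕ)*g2 + y3*g3 + y4*g4 + y5*g5)
          = d*g1 + ((y2:ℕ)*g2 + y3*g3 + y4*g4 + y5*g5) % g1 :=
        ⟨_, (Nat.div_add_mod' _ _).symm⟩
      have heq : dY*g1 + (x2:ℕ)*g2 + x3*g3 + x4*g4 + x5*g5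
          = dX*g1 + (y2:ℕ)*g2 + y3*g3 + y4*g4 + y5*g5 := by omega
      obtain ⟨-, h2, h3, h4, h5⟩ := U _ _ _ _ _ _ _ _ _ _ x2.isLt x3.isLt x4.isLt x5.isLt
        y2.isLt y3.isLt y4.isLt y5.isLt heq
      simp only [Prod.mk.injEq]
      exact ⟨Fin.ext h2, Fin.ext h3, Fin.ext h4, Fin.ext h5⟩
    have hbij : Function.Bijective (fun v : Fin c2 × Fin c3 × Fin c4 × Fin c5 =>
        ((v.1*g2 + v.2.1*g3 + v.2.2.1*g4 + v.2.2.2*g5 : ℕ) : ZMod g1)) := by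
      rw [Fintype.bijective_iff_injective_and_card]
      refine ⟨hinj, ?_⟩
      simp only [Fintype.card_prod, Fintype.card_fin, ZMod.card, ← hcard]
      ring
    intro m
    obtain ⟨⟨x2,x3,x4,x5⟩, hv⟩ := hbij.2 ((m : ℕ) : ZMod g1)
    simp only at hv
    rw [ZMod.natCast_eq_natCast_iff] at hv
    have hmod : ((x2:ℕ)*g2 + x3*g3 + x4*g4 + x5*g5) % g1 = m % g1 := hv
    obtain ⟨dX, hdX⟩ : ∃ d, ((x2:ℕ)*g2 + x3*g3 + x4*g4 + x5*g5)
        = d*g1 + ((x2:ℕ)*g2 + x3*g3 + x4*g4 + x5*g5) % g1 :=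
      ⟨_, (Nat.div_add_mod' _ _).symm⟩
    obtain ⟨dm, hdm⟩ : ∃ d, m = d*g1 + m % g1 :=
      ⟨_, (Nat.div_add_mod' _ _).symm⟩
    exact ⟨x2, x3, x4, x5, dX, dm, x2.isLt, x3.isLt, x4.isLt, x5.isLt, by omega⟩
  refine ⟨?_, ?_, ?_⟩
  · -- (i)
    intro m hm
    obtain ⟨x2,x3,x4,x5,j,k,h2,h3,h4,h5,heq⟩ := hsurj m
    have hle := hmax x2 x3 x4 x5 h2 h3 h4 h5
    rcases Nat.lt_or_ge k j with hjk | hjk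
    · -- k < j : show j - k must be 0, contradiction; in fact derive m = Σx impossible? no:
      exfalso
      have hbr : (j-k)*g1 + k*g1 = j*g1 := by rw [← Nat.add_mul]; congr 1; omega
      have hd : m + (j-k)*g1 = x2*g2 + x3*g3 + x4*g4 + x5*g5 := by omega
      have : g1 ≤ (j-k)*g1 := Nat.le_mul_of_pos_left g1 (by omega)
      omega
    · refine ⟨(k-j), x2, x3, x4, x5, ?_⟩
      have hbr : (k-j)*g1 + j*g1 = k*g1 := by rw [← Nat.add_mul]; congr 1; omega
      omega
  · -- (ii)
    rintro m hmG hrep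
    obtain ⟨x1,x2,x3,x4,x5,h2,h3,h4,h5,heq⟩ := hnorm hrep
    have hid := hcompl x2 x3 x4 x5 h2 h3 h4 h5
    have hbr : (x1+1)*g1 = x1*g1 + 1*g1 := by ring
    have hGx : 0*g1 + (c2-1)*g2 + (c3-1)*g3 + (c4-1)*g4 + (c5-1)*g5
        = (x1+1)*g1 + x2*g2 + x3*g3 + x4*g4 + x5*g5 := by rw [hG] at hmG; omega
    obtain ⟨h1, -⟩ := U _ _ _ _ _ _ _ _ _ _ (by omega) (by omega) (by omega) (by omega)
      h2 h3 h4 h5 hGx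
    omega
  · -- (iii)
    intro m m' hmm
    constructor
    · rintro hrep hrep'
      obtain ⟨x1,x2,x3,x4,x5,h2,h3,h4,h5,heq⟩ := hnorm hrep
      obtain ⟨y1,y2,y3,y4,y5,k2,k3,k4,k5,hw'⟩ := hnorm hrep'
      have hid := hcompl x2 x3 x4 x5 h2 h3 h4 h5
      have hbr : (y1+x1+1)*g1 = y1*g1 + x1*g1 + 1*g1 := by ring
      have hybig : (y1+x1+1)*g1 + y2*g2 + y3*g3 + y4*g4 + y5*g5
          = 0*g1 + (c2-1-x2)*g2 + (c3-1-x3)*g3 + (c4-1-x4)*g4 + (c5-1-x5)*g5 := by omega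
      obtain ⟨h1, -⟩ := U _ _ _ _ _ _ _ _ _ _ k2 k3 k4 k5
        (by omega) (by omega) (by omega) (by omega) hybig
      omega
    · intro hnm'
      obtain ⟨x2,x3,x4,x5,j,k,h2,h3,h4,h5,heq⟩ := hsurj m
      rcases Nat.lt_or_ge k j with hjk | hjk
      · exfalso
        apply hnm'
        have hbr : (j-k)*g1 + k*g1 = j*g1 := by rw [← Nat.add_mul]; congr 1; omega
        have hd : m + (j-k)*g1 = x2*g2 + x3*g3 + x4*g4 + x5*g5 := by omega
        have hid := hcompl x2 x3 x4 x5 h2 h3 h4 h5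
        refine ⟨(j-k) - 1, (c2-1-x2), (c3-1-x3), (c4-1-x4), (c5-1-x5), ?_⟩
        have hbr2 : ((j-k)-1)*g1 + 1*g1 = (j-k)*g1 := by rw [← Nat.add_mul]; congr 1; omega
        omega
      · refine ⟨(k-j), x2, x3, x4, x5, ?_⟩
        have hbr : (k-j)*g1 + j*g1 = k*g1 := by rw [← Nat.add_mul]; congr 1; omega
        omega

end Abstract


lemma cancel_pow {q e f M x y : ℕ} (hq : 0 < q) (hM : M = q^(e+f))
    (hx : x < q^f) (hy : y < q^f) (h : x * q^e ≡ y * q^e [MOD M]) : x = y := by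
  rw [hM, pow_add, mul_comm x, mul_comm y] at h
  have h' := h
  unfold Nat.ModEq at h'
  rw [Nat.mul_mod_mul_left, Nat.mul_mod_mul_left] at h'
  have := Nat.eq_of_mul_eq_mul_left (pow_pos hq e) h'
  rwa [Nat.mod_eq_of_lt hx, Nat.mod_eq_of_lt hy] at this

lemma uniqA (q a b : ℕ) (hq : 2 ≤ q)
    (x1 x2 x3 x4 x5 y1 y2 y3 y4 y5 : ℕ)
    (h2 : x2 < q^(a+1)) (h3 : x3 < q^b) (h4 : x4 < q) (h5 : x5 < q^a)
    (k2 : y2 < q^(a+1)) (k3 : y3 < q^b) (k4 : y4 < q) (k5 : y5 < q^a)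
    (heq : x1*(q^(2*a+b+2)) + x2*(q^(2*a+b+2) + q^(a+b+1)) + x3*(q^(2*a+b+3) + q^(a+1))
        + x4*(q^(2*a+2*b+3) + q^a) + x5*(q^(2*a+2*b+4) - q^(2*a+b+3) + q^(a+b+2) + 1)
      = y1*(q^(2*a+b+2)) + y2*(q^(2*a+b+2) + q^(a+b+1)) + y3*(q^(2*a+b+3) + q^(a+1))
        + y4*(q^(2*a+2*b+3) + q^a) + y5*(q^(2*a+2*b+4) - q^(2*a+b+3) + q^(a+b+2) + 1)) :
    x1 = y1 ∧ x2 = y2 ∧ x3 = y3 ∧ x4 = y4 ∧ x5 = y5 := by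
  have hq0 : 0 < q := by omega
  set A1 := q^(2*a+b+2) with hA1
  set A2 := q^(2*a+b+2) + q^(a+b+1) with hA2
  set A3 := q^(2*a+b+3) + q^(a+1) with hA3
  set A4 := q^(2*a+2*b+3) + q^a with hA4
  set A5 := q^(2*a+2*b+4) - q^(2*a+b+3) + q^(a+b+2) + 1 with hA5
  have hpd : ∀ i j : ℕ, i ≤ j → (q:ℕ)^i ∣ q^j := fun i j h => pow_dvd_pow q h
  -- divisibility facts
  have d1 : ∀ i, i ≤ 2*a+b+2 → q^i ∣ A1 := fun i h => hpd i _ h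
  have d2 : ∀ i, i ≤ a+b+1 → q^i ∣ A2 := fun i h => dvd_add (hpd i _ (by omega)) (hpd i _ h)
  have d3 : ∀ i, i ≤ a+1 → q^i ∣ A3 := fun i h => dvd_add (hpd i _ (by omega)) (hpd i _ h)
  have d4 : ∀ i, i ≤ a → q^i ∣ A4 := fun i h => dvd_add (hpd i _ (by omega)) (hpd i _ h)
  -- step 1 : mod q^a, A5 ≡ 1, others ≡ 0
  have m5 : A5 ≡ 1 [MOD q^a] := by
    have hdvd : (q:ℕ)^a ∣ (q^(2*a+2*b+4) - q^(2*a+b+3) + q^(a+b+2)) :=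
      dvd_add (Nat.dvd_sub (hpd a _ (by omega)) (hpd a _ (by omega))) (hpd a _ (by omega))
    have := (Nat.modEq_zero_iff_dvd).mpr hdvd
    have h' := Nat.ModEq.add_right 1 this;
    rwa [Nat.zero_add] at h'
  have step1 : ∀ z1 z2 z3 z4 z5 : ℕ,
      z1*A1 + z2*A2 + z3*A3 + z4*A4 + z5*A5 ≡ z5 [MOD q^a] := by
    intro z1 z2 z3 z4 z5
    have e1 := (Nat.modEq_zero_iff_dvd).mpr (d1 a (by omega))
    have e2 := (Nat.modEq_zero_iff_dvd).mpr (d2 a (by omega))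
    have e3 := (Nat.modEq_zero_iff_dvd).mpr (d3 a (by omega))
    have e4 := (Nat.modEq_zero_iff_dvd).mpr (d4 a (by omega))
    have := ((((Nat.ModEq.mul_left z1 e1).add (Nat.ModEq.mul_left z2 e2)).add
      (Nat.ModEq.mul_left z3 e3)).add (Nat.ModEq.mul_left z4 e4)).add (Nat.ModEq.mul_left z5 m5)
    simpa using this
  have hx5 : x5 = y5 := by
    have hme : x5 ≡ y5 [MOD q^a] :=
      (step1 x1 x2 x3 x4 x5).symm.trans (heq ▸ step1 y1 y2 y3 y4 y5)
    rwa [Nat.ModEq, Nat.mod_eq_of_lt h5, Nat.mod_eq_of_lt k5] at hme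
  subst hx5
  have heq4 : x1*A1 + x2*A2 + x3*A3 + x4*A4 = y1*A1 + y2*A2 + y3*A3 + y4*A4 :=
    Nat.add_right_cancel heq
  -- step 2 : mod q^(a+1), A4 ≡ q^a
  have m4 : A4 ≡ q^a [MOD q^(a+1)] := by
    have := (Nat.modEq_zero_iff_dvd).mpr (hpd (a+1) (2*a+2*b+3) (by omega))
    have h' := Nat.ModEq.add_right (q^a) this;
    rwa [Nat.zero_add] at h'
  have step2 : ∀ z1 z2 z3 z4 : ℕ,
      z1*A1 + z2*A2 + z3*A3 + z4*A4 ≡ z4 * q^a [MOD q^(a+1)] := by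
    intro z1 z2 z3 z4
    have e1 := (Nat.modEq_zero_iff_dvd).mpr (d1 (a+1) (by omega))
    have e2 := (Nat.modEq_zero_iff_dvd).mpr (d2 (a+1) (by omega))
    have e3 := (Nat.modEq_zero_iff_dvd).mpr (d3 (a+1) (by omega))
    have := (((Nat.ModEq.mul_left z1 e1).add (Nat.ModEq.mul_left z2 e2)).add
      (Nat.ModEq.mul_left z3 e3)).add (Nat.ModEq.mul_left z4 m4)
    simpa using this
  have hx4 : x4 = y4 := by
    refine cancel_pow hq0 (show q^(a+1) = q^(a+1*1) by ring_nf) ?_ ?_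
      ((step2 x1 x2 x3 x4).symm.trans (heq4 ▸ step2 y1 y2 y3 y4)) <;> simpa
  subst hx4
  have heq3 : x1*A1 + x2*A2 + x3*A3 = y1*A1 + y2*A2 + y3*A3 :=
    Nat.add_right_cancel heq4
  -- step 3 : mod q^(a+b+1), A3 ≡ q^(a+1)
  have m3 : A3 ≡ q^(a+1) [MOD q^(a+b+1)] := by
    have := (Nat.modEq_zero_iff_dvd).mpr (hpd (a+b+1) (2*a+b+3) (by omega))
    have h' := Nat.ModEq.add_right (q^(a+1)) this;
    rwa [Nat.zero_add] at h'
  have step3 : ∀ z1 z2 z3 : ℕ,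
      z1*A1 + z2*A2 + z3*A3 ≡ z3 * q^(a+1) [MOD q^(a+b+1)] := by
    intro z1 z2 z3
    have e1 := (Nat.modEq_zero_iff_dvd).mpr (d1 (a+b+1) (by omega))
    have e2 := (Nat.modEq_zero_iff_dvd).mpr (d2 (a+b+1) (by omega))
    have := ((Nat.ModEq.mul_left z1 e1).add (Nat.ModEq.mul_left z2 e2)).add
      (Nat.ModEq.mul_left z3 m3)
    simpa using this
  have hx3 : x3 = y3 := by
    refine cancel_pow hq0 (show q^(a+b+1) = q^((a+1)+b) by ring_nf) h3 k3
      ((step3 x1 x2 x3).symm.trans (heq3 ▸ step3 y1 y2 y3))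
  subst hx3
  have heq2 : x1*A1 + x2*A2 = y1*A1 + y2*A2 := Nat.add_right_cancel heq3
  -- step 4 : mod q^(2a+b+2), A2 ≡ q^(a+b+1)
  have m2 : A2 ≡ q^(a+b+1) [MOD q^(2*a+b+2)] := by
    have := (Nat.modEq_zero_iff_dvd).mpr (hpd (2*a+b+2) (2*a+b+2) le_rfl)
    have h' := Nat.ModEq.add_right (q^(a+b+1)) this;
    rwa [Nat.zero_add] at h'
  have step4 : ∀ z1 z2 : ℕ,
      z1*A1 + z2*A2 ≡ z2 * q^(a+b+1) [MOD q^(2*a+b+2)] := by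
    intro z1 z2
    have e1 := (Nat.modEq_zero_iff_dvd).mpr (d1 (2*a+b+2) le_rfl)
    have := (Nat.ModEq.mul_left z1 e1).add (Nat.ModEq.mul_left z2 m2)
    simpa using this
  have hx2 : x2 = y2 := by
    refine cancel_pow hq0 (show q^(2*a+b+2) = q^((a+b+1)+(a+1)) by ring_nf) h2 k2
      ((step4 x1 x2).symm.trans (heq2 ▸ step4 y1 y2))
  subst hx2
  have heq1 : x1*A1 = y1*A1 := Nat.add_right_cancel heq2
  have hx1 : x1 = y1 := Nat.eq_of_mul_eq_mul_right (pow_pos hq0 _) heq1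
  exact ⟨hx1, rfl, rfl, rfl, rfl⟩

lemma caseA (q a b : ℕ) (hq : 2 ≤ q) :
    (∀ m : ℕ, q^(a+b+2) * (q^(2*a+b+2) - 1) ≤ m →
      m ∈ AddSubmonoid.closure ({q^(2*a+b+2), q^(2*a+b+2) + q^(a+b+1),
        q^(2*a+b+3) + q^(a+1), q^(2*a+2*b+3) + q^a,
        q^(2*a+2*b+4) - q^(2*a+b+3) + q^(a+b+2) + 1} : Set ℕ)) ∧
    (q^(a+b+2) * (q^(2*a+b+2) - 1) - 1 ∉ AddSubmonoid.closure ({q^(2*a+b+2), q^(2*a+b+2) + q^(a+b+1),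
        q^(2*a+b+3) + q^(a+1), q^(2*a+2*b+3) + q^a,
        q^(2*a+2*b+4) - q^(2*a+b+3) + q^(a+b+2) + 1} : Set ℕ)) ∧
    (∀ m : ℕ, m ≤ q^(a+b+2) * (q^(2*a+b+2) - 1) - 1 →
      (m ∈ AddSubmonoid.closure ({q^(2*a+b+2), q^(2*a+b+2) + q^(a+b+1),
        q^(2*a+b+3) + q^(a+1), q^(2*a+2*b+3) + q^a,
        q^(2*a+2*b+4) - q^(2*a+b+3) + q^(a+b+2) + 1} : Set ℕ) ↔
       q^(a+b+2) * (q^(2*a+b+2) - 1) - 1 - m ∉ AddSubmonoid.closure ({q^(2*a+b+2), q^(2*a+b+2) + q^(a+b+1),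
        q^(2*a+b+3) + q^(a+1), q^(2*a+2*b+3) + q^a,
        q^(2*a+2*b+4) - q^(2*a+b+3) + q^(a+b+2) + 1} : Set ℕ))) := by
  have h1 : (1:ℕ) ≤ q^(2*a+b+2) := Nat.one_le_pow _ _ (by omega)
  have h1' : (2:ℕ) ≤ q^(2*a+b+2) := by
    calc (2:ℕ) ≤ q := hq
    _ = q^1 := (pow_one q).symm
    _ ≤ q^(2*a+b+2) := Nat.pow_le_pow_right (by omega) (by omega)
  have h2 : (1:ℕ) ≤ q^(a+b+2)*(q^(2*a+b+2)-1) := by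
    have hh : (1:ℕ) ≤ q^(a+b+2) := Nat.one_le_pow _ _ (by omega)
    exact Nat.one_le_iff_ne_zero.mpr (Nat.mul_ne_zero (by omega) (by omega))
  have h3 : (1:ℕ) ≤ q^(a+1) := Nat.one_le_pow _ _ (by omega)
  have h4 : (1:ℕ) ≤ q^b := Nat.one_le_pow _ _ (by omega)
  have h5 : (1:ℕ) ≤ q := by omega
  have h6 : (1:ℕ) ≤ q^a := Nat.one_le_pow _ _ (by omega)
  have h7 : q^(2*a+b+3) ≤ q^(2*a+2*b+4) := Nat.pow_le_pow_right (by omega) (by omega)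
  have h8 : (1:ℕ) ≤ q^(b+1) := Nat.one_le_pow _ _ (by omega)
  have h9 : q ≤ q^(b+2) := by
    calc q = q^1 := (pow_one q).symm
    _ ≤ q^(b+2) := Nat.pow_le_pow_right (by omega) (by omega)
  obtain ⟨P1, P2, P3⟩ := abstract5 (q^(2*a+b+2)) (q^(2*a+b+2) + q^(a+b+1))
    (q^(2*a+b+3) + q^(a+1)) (q^(2*a+2*b+3) + q^a)
    (q^(2*a+2*b+4) - q^(2*a+b+3) + q^(a+b+2) + 1)
    (q^(a+1)) (q^b) q (q^a)
    (q^(a+b+2)*(q^(2*a+b+2)-1) - 1 + q^(2*a+b+2))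
    (by positivity)
    (by ring)
    ⟨q^(a+1)+1, by ring⟩
    ⟨q^(b+1)-1, 1, by zify [h8]; ring⟩
    ⟨q^(b+2)-q, 0, 1, by zify [h9]; ring⟩
    ⟨(q^(b+1)-1)*(q^(a+1)-1), 0, 0, 1, by zify [h8, h3, h7]; ring⟩
    (by zify [h1, h2, h3, h4, h5, h6, h7]; ring)
    (fun x1 x2 x3 x4 x5 y1 y2 y3 y4 y5 b2 b3 b4 b5 c2 c3 c4 c5 heq =>
      uniqA q a b hq x1 x2 x3 x4 x5 y1 y2 y3 y4 y5 b2 b3 b4 b5 c2 c3 c4 c5 heq)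
  refine ⟨?_, ?_, ?_⟩
  · intro m hm
    rw [mem_closure5]
    exact P1 m (by omega)
  · rw [mem_closure5]
    exact P2 _ (by omega)
  · intro m hm
    rw [mem_closure5, mem_closure5]
    exact P3 m (q^(a+b+2) * (q^(2*a+b+2) - 1) - 1 - m) (by omega)

lemma caseB (q : ℕ) (hq : 2 ≤ q) :
    (∀ m : ℕ, q * (q - 1) ≤ m →
      m ∈ AddSubmonoid.closure ({q, q + 1, q^2 + q, q + 1, q + 1} : Set ℕ)) ∧
    (q * (q - 1) - 1 ∉ AddSubmonoid.closure ({q, q + 1, q^2 + q, q + 1, q + 1} : Set ℕ)) ∧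
    (∀ m : ℕ, m ≤ q * (q - 1) - 1 →
      (m ∈ AddSubmonoid.closure ({q, q + 1, q^2 + q, q + 1, q + 1} : Set ℕ) ↔
       q * (q - 1) - 1 - m ∉ AddSubmonoid.closure ({q, q + 1, q^2 + q, q + 1, q + 1} : Set ℕ))) := by
  have h1 : (1:ℕ) ≤ q := by omega
  have h2 : (1:ℕ) ≤ q*(q-1) := Nat.one_le_iff_ne_zero.mpr (Nat.mul_ne_zero (by omega) (by omega))
  have U : ∀ x1 x2 x3 x4 x5 y1 y2 y3 y4 y5 : ℕ,
      x2 < q → x3 < 1 → x4 < 1 → x5 < 1 → y2 < q → y3 < 1 → y4 < 1 → y5 < 1 →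
      x1*q + x2*(q+1) + x3*(q^2+q) + x4*(q+1) + x5*(q+1)
        = y1*q + y2*(q+1) + y3*(q^2+q) + y4*(q+1) + y5*(q+1) →
      x1 = y1 ∧ x2 = y2 ∧ x3 = y3 ∧ x4 = y4 ∧ x5 = y5 := by
    intro x1 x2 x3 x4 x5 y1 y2 y3 y4 y5 b2 b3 b4 b5 c2 c3 c4 c5 heq
    obtain rfl : x3 = 0 := by omega
    obtain rfl : x4 = 0 := by omega
    obtain rfl : x5 = 0 := by omega
    obtain rfl : y3 = 0 := by omega
    obtain rfl : y4 = 0 := by omega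
    obtain rfl : y5 = 0 := by omega
    simp only [Nat.zero_mul, Nat.add_zero] at heq
    have m0 : q ≡ 0 [MOD q] := (Nat.modEq_zero_iff_dvd).mpr dvd_rfl
    have m2 : q + 1 ≡ 1 [MOD q] := by
      have h' := Nat.ModEq.add_right 1 m0
      rwa [Nat.zero_add] at h'
    have stp : ∀ z1 z2 : ℕ, z1*q + z2*(q+1) ≡ z2 [MOD q] := by
      intro z1 z2
      have := (Nat.ModEq.mul_left z1 m0).add (Nat.ModEq.mul_left z2 m2)
      simpa using this
    have hx2 : x2 = y2 := by
      have hme : x2 ≡ y2 [MOD q] := (stp x1 x2).symm.trans (heq ▸ stp y1 y2)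
      rwa [Nat.ModEq, Nat.mod_eq_of_lt b2, Nat.mod_eq_of_lt c2] at hme
    subst hx2
    have heq1 : x1*q = y1*q := Nat.add_right_cancel heq
    exact ⟨Nat.eq_of_mul_eq_mul_right (by omega) heq1, rfl, rfl, rfl, rfl⟩
  obtain ⟨P1, P2, P3⟩ := abstract5 q (q+1) (q^2+q) (q+1) (q+1) q 1 1 1
    (q*(q-1) - 1 + q)
    (by omega)
    (by ring)
    ⟨q+1, by ring⟩
    ⟨0, q, by ring⟩
    ⟨0, 1, 0, by ring⟩
    ⟨0, 1, 0, 0, by ring⟩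
    (by zify [h1, h2]; ring)
    U
  refine ⟨?_, ?_, ?_⟩
  · intro m hm
    rw [mem_closure5]
    exact P1 m (by omega)
  · rw [mem_closure5]
    exact P2 _ (by omega)
  · intro m hm
    rw [mem_closure5, mem_closure5]
    exact P3 m (q * (q - 1) - 1 - m) (by omega)

/-- Let `S ⊆ ℕ` be the additive submonoid generated by `a₁ = q^{n−1}`,
`a₂ = q^{n−1}+q^{r−1}`, `a₃ = q^n+q^{n−r}`, `a₄ = q^{2r−1}+q^{n−r−1}`,
`a₅ = q^{2r}−q^n+q^r+1`. Write `2g − 1 = q^r(q^{n−1}−1) − 1`. Then: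
(i) every `m ≥ q^r(q^{n−1}−1)` belongs to `S`;
(ii) `2g − 1 ∉ S` (so it is the largest gap of `S`); and
(iii) `S` is symmetric: for every `m ≤ 2g − 1`, `m ∈ S ↔ (2g − 1) − m ∉ S`. -/

theorem stmt5 (p e q n r : ℕ) (hp : p.Prime) (he : 0 < e) (hq : q = p ^ e)
    (hn : 2 ≤ n) (hr1 : (n + 1) / 2 ≤ r) (hr2 : r ≤ n - 1) (hgcd : Nat.gcd n r = 1)
    (S : AddSubmonoid ℕ)
    (hS : S = AddSubmonoid.closure
      {q ^ (n - 1), q ^ (n - 1) + q ^ (r - 1), q ^ n + q ^ (n - r),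
        q ^ (2 * r - 1) + q ^ (n - r - 1), q ^ (2 * r) - q ^ n + q ^ r + 1}) :
    (∀ m : ℕ, q ^ r * (q ^ (n - 1) - 1) ≤ m → m ∈ S) ∧
    (q ^ r * (q ^ (n - 1) - 1) - 1 ∉ S) ∧
    (∀ m : ℕ, m ≤ q ^ r * (q ^ (n - 1) - 1) - 1 →
      (m ∈ S ↔ (q ^ r * (q ^ (n - 1) - 1) - 1) - m ∉ S)) := by
  subst hS
  have hq2 : 2 ≤ q := by
    subst hq
    calc (2:ℕ) ≤ p := hp.two_le
    _ = p^1 := (pow_one p).symm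
    _ ≤ p^e := Nat.pow_le_pow_right hp.one_lt.le he
  have h2r : n ≤ 2*r := by omega
  by_cases hc : 2*r = n
  · -- degenerate case : n = 2, r = 1
    have hdvd : r ∣ n := ⟨2, by omega⟩
    have hr : r = 1 := by rw [← hgcd, Nat.gcd_eq_right hdvd]
    obtain rfl : r = 1 := hr
    obtain rfl : n = 2 := by omega
    simp only [show (2:ℕ)-1 = 1 from rfl, show (1:ℕ)-1 = 0 from rfl,
      show 2*1-1 = 1 from rfl, show (2:ℕ)-1-1 = 0 from rfl, show 2*1 = 2 from rfl,
      pow_one, pow_zero, Nat.sub_self, Nat.zero_add]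
    exact caseB q hq2
  · -- main case
    obtain ⟨a, b, rfl, rfl⟩ : ∃ a b, r = a+b+2 ∧ n = 2*a+b+3 :=
      ⟨n-r-1, 2*r-n-1, by omega, by omega⟩
    have E1 : 2*a+b+3 - 1 = 2*a+b+2 := by omega
    have E2 : a+b+2 - 1 = a+b+1 := by omega
    have E3 : 2*a+b+3 - (a+b+2) = a+1 := by omega
    have E4 : 2*(a+b+2) - 1 = 2*a+2*b+3 := by omega
    have E5 : 2*a+b+3 - (a+b+2) - 1 = a := by omega
    have E6 : 2*(a+b+2) = 2*a+2*b+4 := by omega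
    simp only [E1, E2, E3, E4, E5, E6]
    exact caseA q a b hq2
end

section
/- Assume moreover n > 2 (so that 2r > n). Then the greatest common divisors of the initial segments of the sequence (a₁, a₂, a₃, a₄, a₅) are: gcd(a₁, a₂) = q^{r−1}; gcd(a₁, a₂, a₃) = q^{n−r}; gcd(a₁, a₂, a₃, a₄) = q^{n−r−1}; and gcd(a₁, a₂, a₃, a₄, a₅) = 1. -/
lemma key_gcd (q a b m : ℕ) (h : b ≤ a) (hm : Nat.Coprime q m) :
    Nat.gcd (q ^ a) (q ^ b * m) = q ^ b := by
  have e : q ^ a = q ^ b * q ^ (a - b) := by rw [← pow_add]; congr 1; omega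
  rw [e, Nat.gcd_mul_left, Nat.Coprime.gcd_eq_one (hm.pow_left _), mul_one]

lemma cop_pow_succ (q c : ℕ) (hc : 1 ≤ c) : Nat.Coprime q (q ^ c + 1) := by
  have e : q * q ^ (c - 1) = q ^ c := by rw [← pow_succ']; congr 1; omega
  have := (Nat.coprime_add_mul_left_right q 1 (q ^ (c - 1))).mpr (Nat.coprime_one_right q)
  rwa [e, add_comm] at this

/-- With `a₁ = q^{n−1}`, `a₂ = q^{n−1}+q^{r−1}`, `a₃ = q^n+q^{n−r}`,
`a₄ = q^{2r−1}+q^{n−r−1}`, `a₅ = q^{2r}−q^n+q^r+1` and `n > 2` (so `2r > n`),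
the gcds of the initial segments are `gcd(a₁,a₂) = q^{r−1}`,
`gcd(a₁,a₂,a₃) = q^{n−r}`, `gcd(a₁,a₂,a₃,a₄) = q^{n−r−1}`, and
`gcd(a₁,a₂,a₃,a₄,a₅) = 1`. -/
theorem stmt6 (p e q n r : ℕ) (hp : p.Prime) (he : 0 < e) (hq : q = p ^ e)
    (hn : 2 < n) (hr1 : (n + 1) / 2 ≤ r) (hr2 : r ≤ n - 1) (hgcd : Nat.gcd n r = 1) :
    Nat.gcd (q ^ (n - 1)) (q ^ (n - 1) + q ^ (r - 1)) = q ^ (r - 1) ∧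
    Nat.gcd (Nat.gcd (q ^ (n - 1)) (q ^ (n - 1) + q ^ (r - 1))) (q ^ n + q ^ (n - r))
      = q ^ (n - r) ∧
    Nat.gcd (Nat.gcd (Nat.gcd (q ^ (n - 1)) (q ^ (n - 1) + q ^ (r - 1))) (q ^ n + q ^ (n - r)))
        (q ^ (2 * r - 1) + q ^ (n - r - 1)) = q ^ (n - r - 1) ∧
    Nat.gcd (Nat.gcd (Nat.gcd (Nat.gcd (q ^ (n - 1)) (q ^ (n - 1) + q ^ (r - 1)))
          (q ^ n + q ^ (n - r))) (q ^ (2 * r - 1) + q ^ (n - r - 1)))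
        (q ^ (2 * r) - q ^ n + q ^ r + 1) = 1 := by
  -- first establish n < 2 * r
  have h2r : n < 2 * r := by
    rcases Nat.lt_or_ge n (2 * r) with h | h
    · exact h
    · have hnr : n = 2 * r := by omega
      have hdvd : r ∣ n := ⟨2, by omega⟩
      have : Nat.gcd n r = r := Nat.gcd_eq_right hdvd
      omega
  have hrn : r < n := by omega
  have hr2' : 2 ≤ r := by omega
  -- first gcd
  have e1 : q ^ (n - 1) + q ^ (r - 1) = q ^ (r - 1) * (q ^ (n - r) + 1) := by
    rw [mul_add, mul_one, ← pow_add]; congr 2; omega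
  have g1 : Nat.gcd (q ^ (n - 1)) (q ^ (n - 1) + q ^ (r - 1)) = q ^ (r - 1) := by
    rw [e1]; exact key_gcd q _ _ _ (by omega) (cop_pow_succ q _ (by omega))
  -- second gcd
  have e2 : q ^ n + q ^ (n - r) = q ^ (n - r) * (q ^ r + 1) := by
    rw [mul_add, mul_one, ← pow_add]; congr 2; omega
  have g2 : Nat.gcd (q ^ (r - 1)) (q ^ n + q ^ (n - r)) = q ^ (n - r) := by
    rw [e2]; exact key_gcd q _ _ _ (by omega) (cop_pow_succ q _ (by omega))
  -- third gcd
  have e3 : q ^ (2 * r - 1) + q ^ (n - r - 1) = q ^ (n - r - 1) * (q ^ (3 * r - n) + 1) := by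
    rw [mul_add, mul_one, ← pow_add]; congr 2; omega
  have g3 : Nat.gcd (q ^ (n - r)) (q ^ (2 * r - 1) + q ^ (n - r - 1)) = q ^ (n - r - 1) := by
    rw [e3]; exact key_gcd q _ _ _ (by omega) (cop_pow_succ q _ (by omega))
  -- fourth gcd
  have g4 : Nat.gcd (q ^ (n - r - 1)) (q ^ (2 * r) - q ^ n + q ^ r + 1) = 1 := by
    have hd : q ∣ q ^ (2 * r) - q ^ n + q ^ r :=
      Nat.dvd_add (Nat.dvd_sub (dvd_pow_self q (by omega)) (dvd_pow_self q (by omega)))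
        (dvd_pow_self q (by omega))
    obtain ⟨t, ht⟩ := hd
    have hcop : Nat.Coprime q (q ^ (2 * r) - q ^ n + q ^ r + 1) := by
      rw [ht, add_comm]
      exact (Nat.coprime_add_mul_left_right q 1 t).mpr (Nat.coprime_one_right q)
    exact (hcop.pow_left _).gcd_eq_one
  exact ⟨g1, by rw [g1]; exact g2, by rw [g1, g2]; exact g3, by rw [g1, g2, g3]; exact g4⟩
end

section
/- Define z = z₀^{q^{2r−n}} − x^{q^r+1} + x^{q^{2r−n}−1}·y ∈ A. Then z^{q^n} = x^{q^{2r}+q^{n−r}} − x^{q^{2r}−q^n+q^r+1} − x^{q^{2r}−q^n+q^{n−r}+1} + x^{q^{2r}−q^n}·y − x^{q^n+q^r} + y^{q^r}. (All exponents occurring are nonnegative since 2r ≥ n.) -/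
/-- Let `A` be a commutative ring in which `p = 0`, and `x, y ∈ A` with
`y^{q^n} = y + (x^{q^n} − x)(x^{q^r} + x^{q^{n−r}})`. With
`z₀ = y^{q^{n−r}} − x^{q^{n−r}+1}` and
`z = z₀^{q^{2r−n}} − x^{q^r+1} + x^{q^{2r−n}−1}·y`, one has
`z^{q^n} = x^{q^{2r}+q^{n−r}} − x^{q^{2r}−q^n+q^r+1} − x^{q^{2r}−q^n+q^{n−r}+1}
  + x^{q^{2r}−q^n}·y − x^{q^n+q^r} + y^{q^r}`. -/
theorem stmt11 (p e q n r : ℕ) (hp : p.Prime) (he : 0 < e) (hq : q = p ^ e)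
    (hn : 2 ≤ n) (hr1 : (n + 1) / 2 ≤ r) (hr2 : r ≤ n - 1)
    (A : Type*) [CommRing A] (hchar : (p : A) = 0) (x y : A)
    (hxy : y ^ q ^ n = y + (x ^ q ^ n - x) * (x ^ q ^ r + x ^ q ^ (n - r))) :
    ((y ^ q ^ (n - r) - x ^ (q ^ (n - r) + 1)) ^ q ^ (2 * r - n)
        - x ^ (q ^ r + 1) + x ^ (q ^ (2 * r - n) - 1) * y) ^ q ^ n
      = x ^ (q ^ (2 * r) + q ^ (n - r))
        - x ^ (q ^ (2 * r) - q ^ n + q ^ r + 1)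
        - x ^ (q ^ (2 * r) - q ^ n + q ^ (n - r) + 1)
        + x ^ (q ^ (2 * r) - q ^ n) * y
        - x ^ (q ^ n + q ^ r)
        + y ^ q ^ r := by
  rcases subsingleton_or_nontrivial A with hS | hS
  · exact Subsingleton.elim _ _
  haveI : Fact p.Prime := ⟨hp⟩
  haveI hC : CharP A p := (CharP.charP_iff_prime_eq_zero hp).mpr hchar
  have hq1 : 1 < q := by
    rw [hq]; exact Nat.one_lt_pow (by omega) hp.one_lt
  have hn2r : n ≤ 2 * r := by omega
  have hrn : r ≤ n := by omega
  -- Frobenius helpers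
  have fs : ∀ (k : ℕ) (a b : A), (a - b) ^ q ^ k = a ^ q ^ k - b ^ q ^ k := by
    intro k a b
    rw [hq, ← pow_mul]
    exact sub_pow_char_pow a b (e * k)
  have fa : ∀ (k : ℕ) (a b : A), (a + b) ^ q ^ k = a ^ q ^ k + b ^ q ^ k := by
    intro k a b
    rw [hq, ← pow_mul]
    exact add_pow_char_pow a b p (e * k)
  have pp : ∀ (k l : ℕ) (a : A), (a ^ q ^ k) ^ q ^ l = a ^ (q ^ k * q ^ l) := by
    intro k l a; rw [← pow_mul]
  have hle : q ^ n ≤ q ^ (2 * r) := Nat.pow_le_pow_right (by omega) hn2r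
  -- key exponent facts
  have E1 : q ^ (2 * r - n) * q ^ n = q ^ (2 * r) := by
    rw [← pow_add]; congr 1; omega
  have E2 : q ^ (n - r) * q ^ (2 * r) = q ^ (n + r) := by
    rw [← pow_add]; congr 1; omega
  have E3 : q ^ n * q ^ r = q ^ (n + r) := by rw [← pow_add]
  have E4 : q ^ r * q ^ r = q ^ (2 * r) := by rw [← pow_add]; congr 1; omega
  have E5 : q ^ (n - r) * q ^ r = q ^ n := by rw [← pow_add]; congr 1; omega
  have E6 : (q ^ (n - r) + 1) * q ^ (2 * r) = q ^ (n + r) + q ^ (2 * r) := by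
    rw [Nat.add_mul, one_mul, E2]
  have E7 : (q ^ r + 1) * q ^ n = q ^ (n + r) + q ^ n := by
    rw [Nat.add_mul, one_mul, Nat.mul_comm, E3]
  have E8 : (q ^ (2 * r - n) - 1) * q ^ n = q ^ (2 * r) - q ^ n := by
    rw [Nat.sub_mul, one_mul, E1]
  -- step 1: y^(q^(n+r))
  have key1 : y ^ q ^ (n + r)
      = y ^ q ^ r + (x ^ q ^ (n + r) - x ^ q ^ r) * (x ^ q ^ (2 * r) + x ^ q ^ n) := by
    have h : y ^ q ^ (n + r) = (y ^ q ^ n) ^ q ^ r := by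
      rw [pp, E3]
    rw [h, hxy, fa, mul_pow, fs, fa, pp, pp, pp, E3, E4, E5]
  -- step 2: expand the big power
  have main : ((y ^ q ^ (n - r) - x ^ (q ^ (n - r) + 1)) ^ q ^ (2 * r - n)
        - x ^ (q ^ r + 1) + x ^ (q ^ (2 * r - n) - 1) * y) ^ q ^ n
      = y ^ q ^ (n + r) - x ^ (q ^ (n + r) + q ^ (2 * r))
        - x ^ (q ^ (n + r) + q ^ n)
        + x ^ (q ^ (2 * r) - q ^ n) * y ^ q ^ n := by
    rw [fa, fs, mul_pow, pp, E1, fs, pp, E2, ← pow_mul, E6, ← pow_mul, E7,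
      ← pow_mul, E8]
  rw [main, key1, hxy]
  -- final polynomial identity, using x^(q^(2r)-q^n) * x^(q^n) = x^(q^(2r))
  have hu : x ^ (q ^ (2 * r) - q ^ n) * x ^ q ^ n = x ^ q ^ (2 * r) := by
    rw [← pow_add]; congr 1; omega
  linear_combination (x ^ q ^ r + x ^ q ^ (n - r)) * hu
end

section
/- Setting B = x^{q^{n−r}+1} − x^{q^n+q^{n−r}} ∈ A, one has z₀^{q^n} − z₀ = B − B^{q^{n−r}}. -/
/-- Let `A` be a commutative ring in which `p = 0`, and `x, y ∈ A` with
`y^{q^n} = y + (x^{q^n} − x)(x^{q^r} + x^{q^{n−r}})`. Set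
`z₀ = y^{q^{n−r}} − x^{q^{n−r}+1}` and `B = x^{q^{n−r}+1} − x^{q^n+q^{n−r}}`.
Then `z₀^{q^n} − z₀ = B − B^{q^{n−r}}`. -/
theorem stmt12 (p e q n r : ℕ) (hp : p.Prime) (he : 0 < e) (hq : q = p ^ e)
    (hn : 2 ≤ n) (hr1 : (n + 1) / 2 ≤ r) (hr2 : r ≤ n - 1)
    (A : Type*) [CommRing A] (hchar : (p : A) = 0) (x y : A)
    (hxy : y ^ q ^ n = y + (x ^ q ^ n - x) * (x ^ q ^ r + x ^ q ^ (n - r))) :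
    (y ^ q ^ (n - r) - x ^ (q ^ (n - r) + 1)) ^ q ^ n
        - (y ^ q ^ (n - r) - x ^ (q ^ (n - r) + 1))
      = (x ^ (q ^ (n - r) + 1) - x ^ (q ^ n + q ^ (n - r)))
        - (x ^ (q ^ (n - r) + 1) - x ^ (q ^ n + q ^ (n - r))) ^ q ^ (n - r) := by
  rcases subsingleton_or_nontrivial A with hA | hA
  · exact Subsingleton.elim _ _
  haveI : CharP A p := (CharP.charP_iff_prime_eq_zero hp).2 hchar
  haveI : ExpChar A p := ExpChar.prime hp
  have hqk : ∀ k : ℕ, q ^ k = p ^ (e * k) := fun k => by rw [hq, ← pow_mul]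
  have fsub : ∀ (u v : A) (k : ℕ), (u - v) ^ q ^ k = u ^ q ^ k - v ^ q ^ k := by
    intro u v k; rw [hqk k]; exact sub_pow_expChar_pow ..
  have fadd : ∀ (u v : A) (k : ℕ), (u + v) ^ q ^ k = u ^ q ^ k + v ^ q ^ k := by
    intro u v k; rw [hqk k]; exact add_pow_expChar_pow ..
  set m := n - r with hm
  have hrm : r + m = n := by omega
  have hab : q ^ n = q ^ r * q ^ m := by rw [← pow_add, hrm]
  have h1 : (y ^ q ^ m) ^ q ^ n = (y ^ q ^ n) ^ q ^ m := by
    rw [← pow_mul, ← pow_mul, mul_comm]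
  rw [fsub, h1, hxy, fadd, mul_pow, fsub, fadd, fsub, ← pow_mul, ← pow_mul,
    ← pow_mul, ← pow_mul, ← pow_mul, ← pow_mul, hab]
  ring
end

section
/- Let α and β be positive integers with (n−r)·α − β·n = 1, and set B = x^{q^{n−r}+1} − x^{q^n+q^{n−r}} ∈ A. Then Σ_{i=0}^{α−1} (z₀^{q^n} − z₀)^{q^{(n−r)i}} = B − B^{q^{nβ+1}}. -/
/-- Let `A` be a commutative ring in which `p = 0`, and `x, y ∈ A` with
`y^{q^n} = y + (x^{q^n} − x)(x^{q^r} + x^{q^{n−r}})`. Set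
`z₀ = y^{q^{n−r}} − x^{q^{n−r}+1}` and `B = x^{q^{n−r}+1} − x^{q^n+q^{n−r}}`.
If `α, β` are positive integers with `(n−r)·α − β·n = 1` (i.e. `(n−r)α = βn + 1`), then
`Σ_{i=0}^{α−1} (z₀^{q^n} − z₀)^{q^{(n−r)i}} = B − B^{q^{nβ+1}}`. -/
theorem stmt13 (p e q n r : ℕ) (hp : p.Prime) (he : 0 < e) (hq : q = p ^ e)
    (hn : 2 ≤ n) (hr1 : (n + 1) / 2 ≤ r) (hr2 : r ≤ n - 1)
    (α β : ℕ) (hα : 0 < α) (hβ : 0 < β) (hαβ : (n - r) * α = β * n + 1)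
    (A : Type*) [CommRing A] (hchar : (p : A) = 0) (x y : A)
    (hxy : y ^ q ^ n = y + (x ^ q ^ n - x) * (x ^ q ^ r + x ^ q ^ (n - r))) :
    ∑ i ∈ Finset.range α,
        ((y ^ q ^ (n - r) - x ^ (q ^ (n - r) + 1)) ^ q ^ n
          - (y ^ q ^ (n - r) - x ^ (q ^ (n - r) + 1))) ^ q ^ ((n - r) * i)
      = (x ^ (q ^ (n - r) + 1) - x ^ (q ^ n + q ^ (n - r)))
        - (x ^ (q ^ (n - r) + 1) - x ^ (q ^ n + q ^ (n - r))) ^ q ^ (n * β + 1) := by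
  nontriviality A
  haveI : Fact p.Prime := ⟨hp⟩
  haveI : CharP A p := (CharP.charP_iff_prime_eq_zero hp).mpr hchar
  set m := n - r with hm
  have hrn : r ≤ n := le_trans hr2 (Nat.sub_le n 1)
  have hmr : r + m = n := by omega
  have fsub : ∀ (a b : A) (k : ℕ), (a - b) ^ q ^ k = a ^ q ^ k - b ^ q ^ k := by
    intro a b k
    rw [hq, ← pow_mul, sub_pow_char_pow]
  have fadd : ∀ (a b : A) (k : ℕ), (a + b) ^ q ^ k = a ^ q ^ k + b ^ q ^ k := by
    intro a b k
    rw [hq, ← pow_mul, add_pow_char_pow]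
  set B := x ^ (q ^ m + 1) - x ^ (q ^ n + q ^ m) with hB
  have key : (y ^ q ^ m - x ^ (q ^ m + 1)) ^ q ^ n - (y ^ q ^ m - x ^ (q ^ m + 1))
      = B - B ^ q ^ m := by
    have hy' : (y ^ q ^ m) ^ q ^ n
        = (y + (x ^ q ^ n - x) * (x ^ q ^ r + x ^ q ^ m)) ^ q ^ m := by
      rw [← pow_mul, mul_comm, pow_mul, hxy]
    rw [fsub, hy', fadd, mul_pow, fsub, fadd]
    have hxrm : (x ^ q ^ r) ^ q ^ m = x ^ q ^ n := by
      rw [← pow_mul, ← pow_add, hmr]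
    rw [hxrm, hB, fsub]
    rw [← pow_mul, ← pow_mul, ← pow_mul, ← pow_mul, ← pow_mul, ← pow_add]
    ring
  have step : ∀ i ∈ Finset.range α,
      ((y ^ q ^ m - x ^ (q ^ m + 1)) ^ q ^ n - (y ^ q ^ m - x ^ (q ^ m + 1))) ^ q ^ (m * i)
        = B ^ q ^ (m * i) - B ^ q ^ (m * (i + 1)) := by
    intro i _
    rw [key, fsub, ← pow_mul, ← pow_add]
    congr 2
    ring
  rw [Finset.sum_congr rfl step, Finset.sum_range_sub' (fun i => B ^ q ^ (m * i))]
  rw [Nat.mul_zero, pow_zero, pow_one, hαβ]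
  rw [show β * n + 1 = n * β + 1 by ring]
end

section
/- Let (δ, μ) ∈ F_{q^n} × F_{q^n} satisfy T_n(μ) = f_r(δ), and let γ ∈ F_{q^n} satisfy γ^{q−1} = 1 if n is odd and γ^{q²−1} = 1 if n is even. Then for every (a, b) ∈ F_{q^n} × F_{q^n}: T_n(b) = f_r(a) if and only if T_n(γ^{1+q}·b + (δ^{q^{n−r}} + δ^{q^r})·γ·a + μ) = f_r(γ·a + δ). In other words, the affine map (a,b) ↦ (γa + δ, γ^{1+q}b + (δ^{q^{n−r}}+δ^{q^r})γa + μ) maps the solution set of T_n(y) = f_r(x) in F_{q^n}² bijectively onto itself. -/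
/-- `T_n(z) = z + z^q + ⋯ + z^{q^{n−1}}`. -/
def Tn (q n : ℕ) {F : Type*} [CommRing F] (z : F) : F :=
  ∑ i ∈ Finset.range n, z ^ q ^ i

/-- `f_r(a) = Σ_{i=0}^{n−r−1} a^{(1+q^r)q^i} + Σ_{i=0}^{r−1} a^{(1+q^{n−r})q^i}`. -/
def fr (q n r : ℕ) {F : Type*} [CommRing F] (a : F) : F :=
  ∑ i ∈ Finset.range (n - r), a ^ ((1 + q ^ r) * q ^ i)
    + ∑ i ∈ Finset.range r, a ^ ((1 + q ^ (n - r)) * q ^ i)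

open Finset in
lemma sum_range_add' {F : Type*} [AddCommMonoid F] (f : ℕ → F) (m k : ℕ) :
    ∑ i ∈ range (m + k), f i = ∑ i ∈ range m, f i + ∑ i ∈ range k, f (m + i) := by
  induction k with
  | zero => simp
  | succ k ih => rw [Nat.add_succ, sum_range_succ, ih, sum_range_succ, add_assoc]

/-- Let `(δ, μ) ∈ F_{q^n}²` satisfy `T_n(μ) = f_r(δ)`, and let `γ ∈ F_{q^n}` satisfy
`γ^{q−1} = 1` if `n` is odd and `γ^{q²−1} = 1` if `n` is even. Then for every
`(a, b)`: `T_n(b) = f_r(a)` iff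
`T_n(γ^{1+q}·b + (δ^{q^{n−r}} + δ^{q^r})·γ·a + μ) = f_r(γ·a + δ)`. -/
theorem stmt14 (p e q n r : ℕ) (hp : p.Prime) (he : 0 < e) (hq : q = p ^ e)
    (hn : 2 < n) (hr1 : (n + 1) / 2 ≤ r) (hr2 : r ≤ n - 1) (hgcd : Nat.gcd n r = 1)
    (F : Type*) [Field F] [Fintype F] (hF : Fintype.card F = q ^ n)
    (δ μ γ : F) (hδμ : Tn q n μ = fr q n r δ)
    (hγodd : Odd n → γ ^ (q - 1) = 1) (hγeven : Even n → γ ^ (q ^ 2 - 1) = 1) :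
    ∀ a b : F,
      Tn q n b = fr q n r a ↔
        Tn q n (γ ^ (1 + q) * b + (δ ^ q ^ (n - r) + δ ^ q ^ r) * γ * a + μ)
          = fr q n r (γ * a + δ) := by
  intro a b
  haveI hfp : Fact p.Prime := ⟨hp⟩
  have hq1 : 1 < q := by rw [hq]; exact Nat.one_lt_pow he.ne' hp.one_lt
  have hqsq : 1 < q ^ 2 := by nlinarith
  have hrn : r < n := by omega
  have hr0 : 1 ≤ r := by
    rcases Nat.eq_zero_or_pos r with h | h
    · subst h; simp [Nat.gcd_zero_right] at hgcd; omega
    · exact h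
  -- characteristic p
  haveI hchar : CharP F p := by
    obtain ⟨c, hc⟩ := CharP.exists F
    haveI := hc
    have hcp : c.Prime := CharP.char_is_prime F c
    have hdvd : c ∣ q ^ n := by
      rw [← hF, ← CharP.cast_eq_zero_iff F c]
      exact Nat.cast_card_eq_zero F
    have hcq : c ∣ q := hcp.dvd_of_dvd_pow hdvd
    have : c ∣ p := by rw [hq] at hcq; exact hcp.dvd_of_dvd_pow hcq
    have := (Nat.prime_dvd_prime_iff_eq hcp hp).mp this
    rwa [this] at hc
  -- Frobenius additivity
  have hfrob : ∀ (i : ℕ) (x y : F), (x + y) ^ q ^ i = x ^ q ^ i + y ^ q ^ i := by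
    intro i x y
    rw [hq, ← pow_mul]
    exact add_pow_char_pow x y p (e * i)
  have hcard : ∀ x : F, x ^ q ^ n = x := fun x => by rw [← hF]; exact FiniteField.pow_card x
  have hfix : ∀ (Q : ℕ) (u : F), u ^ Q = u → ∀ i, u ^ Q ^ i = u := by
    intro Q u hu i
    induction i with
    | zero => simp
    | succ i ih => rw [pow_succ, pow_mul, ih, hu]
  have hTadd : ∀ x y : F, Tn q n (x + y) = Tn q n x + Tn q n y := by
    intro x y
    unfold Tn
    rw [← Finset.sum_add_distrib]
    exact Finset.sum_congr rfl fun i _ => hfrob i x y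
  have hTmul : ∀ u : F, u ^ q = u → ∀ x, Tn q n (u * x) = u * Tn q n x := by
    intro u hu x
    unfold Tn
    rw [Finset.mul_sum]
    exact Finset.sum_congr rfl fun i _ => by rw [mul_pow, hfix q u hu i]
  -- gamma is nonzero
  have hγ0 : γ ≠ 0 := by
    intro h
    rcases Nat.even_or_odd n with hne | hno
    · have h1 := hγeven hne
      rw [h, zero_pow (by omega : q ^ 2 - 1 ≠ 0)] at h1
      exact zero_ne_one h1
    · have h1 := hγodd hno
      rw [h, zero_pow (by omega : q - 1 ≠ 0)] at h1
      exact zero_ne_one h1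
  -- gamma Frobenius facts
  have hγq2 : (γ ^ q) ^ q = γ := by
    rcases Nat.even_or_odd n with hne | hno
    · have h := hγeven hne
      have h2 : γ ^ q ^ 2 = γ := by
        rw [show q ^ 2 = q ^ 2 - 1 + 1 by omega, pow_succ, h, one_mul]
      rwa [pow_two, pow_mul] at h2
    · have h := hγodd hno
      have hγq : γ ^ q = γ := by
        rw [show q = q - 1 + 1 by omega, pow_succ, h, one_mul]
      rw [hγq, hγq]
  have hγq2' : γ ^ q ^ 2 = γ := by rw [pow_two, pow_mul]; exact hγq2
  have hγoddpow : ∀ k, Odd k → γ ^ q ^ k = γ ^ q := by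
    intro k hk
    obtain ⟨m, rfl⟩ := hk
    have h2m : γ ^ q ^ (2 * m) = γ := by
      rw [pow_mul q 2 m]
      exact hfix (q ^ 2) γ hγq2' m
    rw [pow_succ q, pow_mul γ, h2m]
  have hγr : γ ^ q ^ r = γ ^ q := by
    rcases Nat.even_or_odd n with hne | hno
    · -- n even, so r is odd
      have hro : Odd r := by
        rcases Nat.even_or_odd r with hre | hro
        · exfalso
          have : 2 ∣ Nat.gcd n r := Nat.dvd_gcd hne.two_dvd hre.two_dvd
          rw [hgcd] at this; omega
        · exact hro
      exact hγoddpow r hro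
    · have h := hγodd hno
      have hγq : γ ^ q = γ := by
        rw [show q = q - 1 + 1 by omega, pow_succ, h, one_mul]
      rw [hγq]; exact hfix q γ hγq r
  have hγnr : γ ^ q ^ (n - r) = γ ^ q := by
    rcases Nat.even_or_odd n with hne | hno
    · have hro : Odd r := by
        rcases Nat.even_or_odd r with hre | hro
        · exfalso
          have : 2 ∣ Nat.gcd n r := Nat.dvd_gcd hne.two_dvd hre.two_dvd
          rw [hgcd] at this; omega
        · exact hro
      exact hγoddpow (n - r) (Nat.Even.sub_odd hrn.le hne hro)
    · have h := hγodd hno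
      have hγq : γ ^ q = γ := by
        rw [show q = q - 1 + 1 by omega, pow_succ, h, one_mul]
      rw [hγq]; exact hfix q γ hγq (n - r)
  -- the multiplier c = γ^{1+q}
  have hc_eq : γ ^ (1 + q) = γ * γ ^ q := by rw [pow_add, pow_one]
  have hcq : (γ ^ (1 + q)) ^ q = γ ^ (1 + q) := by
    rw [hc_eq, mul_pow, hγq2, mul_comm]
  have hc0 : γ ^ (1 + q) ≠ 0 := pow_ne_zero _ hγ0
  have hγcr : γ ^ (1 + q ^ r) = γ ^ (1 + q) := by
    rw [pow_add, pow_add, pow_one, hγr]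
  have hγcnr : γ ^ (1 + q ^ (n - r)) = γ ^ (1 + q) := by
    rw [pow_add, pow_add, pow_one, hγnr]
  -- fr (γ * a) = γ^{1+q} * fr a
  have hfr_mul : fr q n r (γ * a) = γ ^ (1 + q) * fr q n r a := by
    unfold fr
    rw [mul_add, Finset.mul_sum, Finset.mul_sum]
    congr 1
    · refine Finset.sum_congr rfl fun i _ => ?_
      rw [pow_mul, mul_pow, hγcr, mul_pow, hfix q _ hcq i, ← pow_mul]
    · refine Finset.sum_congr rfl fun i _ => ?_
      rw [pow_mul, mul_pow, hγcnr, mul_pow, hfix q _ hcq i, ← pow_mul]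
  set x : F := γ * a with hx
  -- shift lemma for Tn (δ^{q^k} * x)
  have hshift : ∀ k, k ≤ n → Tn q n (δ ^ q ^ k * x)
      = ∑ i ∈ Finset.range (n - k), δ ^ q ^ (k + i) * x ^ q ^ i
        + ∑ i ∈ Finset.range k, δ ^ q ^ i * x ^ q ^ (n - k + i) := by
    intro k hk
    unfold Tn
    have h1 : ∀ j, (δ ^ q ^ k * x) ^ q ^ j = δ ^ q ^ (k + j) * x ^ q ^ j := by
      intro j
      rw [mul_pow, ← pow_mul, ← pow_add]
    rw [Finset.sum_congr rfl fun j _ => h1 j]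
    conv_lhs => rw [show n = (n - k) + k from (Nat.sub_add_cancel hk).symm]
    rw [sum_range_add' (fun j => δ ^ q ^ (k + j) * x ^ q ^ j) (n - k) k]
    congr 1
    refine Finset.sum_congr rfl fun i _ => ?_
    have h2 : k + (n - k + i) = n + i := by omega
    rw [h2, pow_add q n i, pow_mul δ, hcard δ]
  -- cross term
  have hcross : Tn q n ((δ ^ q ^ (n - r) + δ ^ q ^ r) * x)
      = (∑ i ∈ Finset.range (n - r),
            (x ^ q ^ i * δ ^ q ^ (r + i) + δ ^ q ^ i * x ^ q ^ (r + i)))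
        + ∑ i ∈ Finset.range r,
            (x ^ q ^ i * δ ^ q ^ (n - r + i) + δ ^ q ^ i * x ^ q ^ (n - r + i)) := by
    rw [add_mul, hTadd]
    rw [hshift (n - r) (by omega), hshift r (by omega)]
    have hnnr : n - (n - r) = r := by omega
    rw [hnnr]
    rw [Finset.sum_add_distrib, Finset.sum_add_distrib]
    rw [Finset.sum_congr rfl (fun i _ => mul_comm (δ ^ q ^ (n - r + i)) (x ^ q ^ i)),
        Finset.sum_congr rfl (fun i _ => mul_comm (δ ^ q ^ (r + i)) (x ^ q ^ i))]
    ring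
  -- expansion of fr (x + δ)
  have hterm : ∀ (k i : ℕ), (x + δ) ^ ((1 + q ^ k) * q ^ i)
      = x ^ ((1 + q ^ k) * q ^ i)
        + (x ^ q ^ i * δ ^ q ^ (k + i) + δ ^ q ^ i * x ^ q ^ (k + i))
        + δ ^ ((1 + q ^ k) * q ^ i) := by
    intro k i
    have h1 : (1 + q ^ k) * q ^ i = q ^ i + q ^ (k + i) := by
      rw [add_mul, one_mul, ← pow_add]
    rw [h1, pow_add (x + δ), pow_add x, pow_add δ, hfrob i x δ, hfrob (k + i) x δ]
    ring
  have hfr_add : fr q n r (x + δ)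
      = fr q n r x + Tn q n ((δ ^ q ^ (n - r) + δ ^ q ^ r) * x) + fr q n r δ := by
    rw [hcross]
    unfold fr
    rw [Finset.sum_congr rfl fun i _ => hterm r i,
        Finset.sum_congr rfl fun i _ => hterm (n - r) i]
    simp only [Finset.sum_add_distrib]
    ring
  -- put everything together
  have hlhs : Tn q n (γ ^ (1 + q) * b + (δ ^ q ^ (n - r) + δ ^ q ^ r) * γ * a + μ)
      = γ ^ (1 + q) * Tn q n b
        + Tn q n ((δ ^ q ^ (n - r) + δ ^ q ^ r) * x) + Tn q n μ := by
    rw [hTadd, hTadd, hTmul _ hcq, hx, mul_assoc]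
  have hrhs : fr q n r (γ * a + δ)
      = γ ^ (1 + q) * fr q n r a
        + Tn q n ((δ ^ q ^ (n - r) + δ ^ q ^ r) * x) + fr q n r δ := by
    rw [← hx, hfr_add, hfr_mul]
  rw [hlhs, hrhs, hδμ]
  constructor
  · intro h; rw [h]
  · intro h
    have h2 := add_right_cancel (add_right_cancel h)
    exact mul_left_cancel₀ hc0 h2
end

section
/- Let G be the set of all maps φ_{γ,δ,μ}: F_{q^n}² → F_{q^n}², φ_{γ,δ,μ}(a,b) = (γa + δ, γ^{1+q}b + (δ^{q^{n−r}}+δ^{q^r})γa + μ), where (δ, μ) ranges over all pairs with T_n(μ) = f_r(δ) and γ ranges over all elements of F_{q^n} with γ^{q−1} = 1 if n is odd, γ^{q²−1} = 1 if n is even. Then every element of G is a bijection of F_{q^n}², G is closed under composition and under taking inverses (so G is a subgroup of the symmetric group on F_{q^n}²), and the cardinality of G equals q^{2n−1}(q−1) if n is odd and q^{2n−1}(q²−1) if n is even. -/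
namespace Stmt15

variable {p e q n r : ℕ} {F : Type*} [Field F] [Fintype F]
variable (hp : p.Prime) (he : 0 < e) (hq : q = p ^ e) (hn : 0 < n) (hF : Fintype.card F = q ^ n)

include hp he hq in
lemma two_le_q : 2 ≤ q := by
  rw [hq]
  calc 2 ≤ p := hp.two_le
  _ = p ^ 1 := (pow_one p).symm
  _ ≤ p ^ e := Nat.pow_le_pow_right hp.pos he

include hp hq hF in
lemma charF : CharP F p := by
  obtain ⟨p', hcp'⟩ := CharP.exists F
  haveI := hcp'
  have hp' : p'.Prime := CharP.char_is_prime F p'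
  obtain ⟨m, hm⟩ := FiniteField.card F p'
  have hd : p' ∣ p ^ (e * n) := by
    rw [pow_mul, ← hq, ← hF, hm.2]
    exact dvd_pow_self p' m.2.ne'
  have : p' = p := (Nat.prime_dvd_prime_iff_eq hp' hp).mp (hp'.dvd_of_dvd_pow hd)
  rwa [this] at hcp'

include hp he hq hF in
lemma qpow_add (x y : F) (k : ℕ) : (x + y) ^ q ^ k = x ^ q ^ k + y ^ q ^ k := by
  haveI := charF hp hq hF
  haveI := Fact.mk hp
  rw [hq, ← pow_mul, add_pow_char_pow]

include hp he hq hF in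
lemma qpow_sub (x y : F) (k : ℕ) : (x - y) ^ q ^ k = x ^ q ^ k - y ^ q ^ k := by
  haveI := charF hp hq hF
  haveI := Fact.mk hp
  rw [hq, ← pow_mul, sub_pow_char_pow]

include hp he hq hF in
lemma qpow_neg (x : F) (k : ℕ) : (-x) ^ q ^ k = -(x ^ q ^ k) := by
  have h := qpow_sub hp he hq hF 0 x k
  have h2 : (0:F) ^ q ^ k = 0 :=
    zero_pow (pow_pos (lt_of_lt_of_le two_pos (two_le_q hp he hq)) k).ne'
  simpa [h2] using h

include hp he hq hF in
lemma qpow_sum {ι : Type*} (s : Finset ι) (f : ι → F) (k : ℕ) :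
    (∑ i ∈ s, f i) ^ q ^ k = ∑ i ∈ s, (f i) ^ q ^ k := by
  haveI := charF hp hq hF
  haveI := Fact.mk hp
  rw [hq, ← pow_mul, sum_pow_char_pow]

include hF in
lemma pow_card_q (x : F) : x ^ q ^ n = x := by
  rw [← hF, FiniteField.pow_card]

include hF in
lemma qwrap (z : F) (k : ℕ) : z ^ q ^ (n + k) = z ^ q ^ k := by
  rw [pow_add, pow_mul, pow_card_q hF]

lemma fix_pow {c : F} (hc : c ^ q = c) (k : ℕ) : c ^ q ^ k = c := by
  induction k with
  | zero => simp
  | succ k ih => rw [pow_succ, pow_mul, ih, hc]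

include hp he hq hF in
lemma Tn_add (x y : F) : Tn q n (x + y) = Tn q n x + Tn q n y := by
  unfold Tn
  rw [← Finset.sum_add_distrib]
  exact Finset.sum_congr rfl fun i _ => qpow_add hp he hq hF x y i

include hp he hq hF in
lemma Tn_sub (x y : F) : Tn q n (x - y) = Tn q n x - Tn q n y := by
  unfold Tn
  rw [← Finset.sum_sub_distrib]
  exact Finset.sum_congr rfl fun i _ => qpow_sub hp he hq hF x y i

include hF in
lemma Tn_pow_q (z : F) : Tn q n (z ^ q) = Tn q n z := by
  have fn : z ^ q ^ n = z := pow_card_q hF z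
  calc Tn q n (z ^ q) = ∑ i ∈ Finset.range n, z ^ q ^ (i + 1) := by
        unfold Tn
        refine Finset.sum_congr rfl fun i _ => ?_
        rw [← pow_mul, ← pow_succ']
    _ = (∑ i ∈ Finset.range (n + 1), z ^ q ^ i) - z ^ q ^ 0 := by
        rw [Finset.sum_range_succ']; ring
    _ = Tn q n z := by
        rw [Finset.sum_range_succ, fn]; simp [Tn]

include hF in
lemma Tn_pow_qk (z : F) (k : ℕ) : Tn q n (z ^ q ^ k) = Tn q n z := by
  induction k with
  | zero => simp
  | succ k ih => rw [pow_succ, pow_mul, Tn_pow_q hF, ih]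

include hp he hq hF in
lemma Tn_qpow_self (z : F) : (Tn q n z) ^ q = Tn q n z := by
  have hs := qpow_sum hp he hq hF (Finset.range n) (fun i => z ^ q ^ i) 1
  rw [pow_one q] at hs
  have h2 : ∀ i ∈ Finset.range n, (z ^ q ^ i) ^ q = (z ^ q) ^ q ^ i := fun i _ => by
    rw [← pow_mul, mul_comm, pow_mul]
  calc (Tn q n z) ^ q = Tn q n (z ^ q) := by
        unfold Tn; rw [hs]; exact Finset.sum_congr rfl h2
    _ = Tn q n z := Tn_pow_q hF z

lemma Tn_smul {c : F} (z : F) (hc : c ^ q = c) : Tn q n (c * z) = c * Tn q n z := by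
  unfold Tn
  rw [Finset.mul_sum]
  exact Finset.sum_congr rfl fun i _ => by rw [mul_pow, fix_pow hc]

include hF in
lemma fr_eq (hrn : r ≤ n) (a : F) : fr q n r a = Tn q n (a ^ (1 + q ^ r)) := by
  unfold Tn fr
  have h1 : ∀ i ∈ Finset.range n, (a ^ (1 + q ^ r)) ^ q ^ i = a ^ ((1 + q ^ r) * q ^ i) :=
    fun i _ => by rw [← pow_mul]
  have hsplit : Finset.range n = Finset.range (n - r) ∪ Finset.Ico (n - r) n := by
    rw [Finset.range_eq_Ico, Finset.range_eq_Ico, Finset.Ico_union_Ico_eq_Ico (Nat.zero_le _) (Nat.sub_le n r)]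
  rw [Finset.sum_congr rfl h1, hsplit,
    Finset.sum_union (by
      rw [Finset.range_eq_Ico]
      exact Finset.Ico_disjoint_Ico_consecutive 0 (n - r) n),
    Finset.sum_Ico_eq_sum_range]
  congr 1
  rw [Nat.sub_sub_self hrn]
  refine Finset.sum_congr rfl fun j hj => ?_
  have hwrap : a ^ q ^ (n + j) = a ^ q ^ j := qwrap hF a j
  have key : (1 + q ^ r) * q ^ (n - r + j) = q ^ (n - r + j) + q ^ (n + j) := by
    rw [add_mul, one_mul, ← pow_add]
    congr 2
    omega
  rw [key, pow_add, hwrap, add_mul, one_mul, pow_add, mul_comm, pow_add q (n - r) j]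

end Stmt15
section Gam
variable {p e q n r : ℕ} {F : Type*} [Field F] [Fintype F]
variable (hp : p.Prime) (he : 0 < e) (hq : q = p ^ e) (hn : 0 < n) (hF : Fintype.card F = q ^ n)

open Stmt15

/-- The γ-condition. -/
def gcond (q n : ℕ) (γ : F) : Prop :=
  (Odd n → γ ^ (q - 1) = 1) ∧ (Even n → γ ^ (q ^ 2 - 1) = 1)

variable {γ : F}

include hp he hq in
lemma gcond_ne_zero (hγ : gcond q n γ) : γ ≠ 0 := by
  have h2 : 2 ≤ q := two_le_q hp he hq
  rintro rfl
  have h4 : 4 ≤ q ^ 2 := by calc (4:ℕ) = 2 * 2 := rfl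
                                 _ ≤ q * q := Nat.mul_le_mul h2 h2
                                 _ = q ^ 2 := (sq q).symm
  rcases Nat.even_or_odd n with hpar | hpar
  · have := hγ.2 hpar
    rw [zero_pow (by omega : q ^ 2 - 1 ≠ 0)] at this
    exact zero_ne_one this
  · have := hγ.1 hpar
    rw [zero_pow (by omega : q - 1 ≠ 0)] at this
    exact zero_ne_one this

include hp he hq in
lemma gcond_q2 (hγ : gcond q n γ) : γ ^ q ^ 2 = γ := by
  have h2 : 2 ≤ q := two_le_q hp he hq
  have h4 : 4 ≤ q ^ 2 := by calc (4:ℕ) = 2 * 2 := rfl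
                                 _ ≤ q * q := Nat.mul_le_mul h2 h2
                                 _ = q ^ 2 := (sq q).symm
  rcases Nat.even_or_odd n with hpar | hpar
  · have h := hγ.2 hpar
    calc γ ^ q ^ 2 = γ ^ (q ^ 2 - 1) * γ := by
          rw [← pow_succ]; congr 1; omega
      _ = γ := by rw [h, one_mul]
  · have h := hγ.1 hpar
    have hqq : γ ^ q = γ := by
      calc γ ^ q = γ ^ (q - 1) * γ := by rw [← pow_succ]; congr 1; omega
        _ = γ := by rw [h, one_mul]
    calc γ ^ q ^ 2 = (γ ^ q) ^ q := by rw [← pow_mul, sq]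
      _ = γ := by rw [hqq, hqq]

include hp he hq in
lemma gcond_q_of_odd (hpar : Odd n) (hγ : gcond q n γ) : γ ^ q = γ := by
  have h2 : 2 ≤ q := two_le_q hp he hq
  have h := hγ.1 hpar
  calc γ ^ q = γ ^ (q - 1) * γ := by rw [← pow_succ]; congr 1; omega
    _ = γ := by rw [h, one_mul]

lemma pow_q_odd_exp {γ : F} (hγ2 : γ ^ q ^ 2 = γ) {k : ℕ} (hk : Odd k) :
    γ ^ q ^ k = γ ^ q := by
  obtain ⟨m, rfl⟩ := hk
  have h1 : γ ^ (q ^ 2) ^ m = γ := by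
    induction m with
    | zero => simp
    | succ m ih => rw [pow_succ, pow_mul, ih, hγ2]
  have h2 : q ^ (2 * m + 1) = (q ^ 2) ^ m * q := by rw [pow_succ, pow_mul]
  rw [h2, pow_mul, h1]

lemma odd_of_gcd {m : ℕ} (hpar : Even n) (hgcd : Nat.gcd n m = 1) : Odd m := by
  rcases Nat.even_or_odd m with h | h
  · exfalso
    have : 2 ∣ Nat.gcd n m := Nat.dvd_gcd hpar.two_dvd h.two_dvd
    omega
  · exact h

include hp he hq in
lemma gcond_qk_odd (hγ : gcond q n γ) {k : ℕ} (hk : Even n → Odd k) :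
    γ ^ q ^ k = γ ^ q := by
  rcases Nat.even_or_odd n with hpar | hpar
  · exact pow_q_odd_exp (gcond_q2 hp he hq hγ) (hk hpar)
  · have hqq : γ ^ q = γ := gcond_q_of_odd hp he hq hpar hγ
    rw [fix_pow hqq, hqq]

include hp he hq in
lemma gcond_c_fix (hγ : gcond q n γ) : (γ ^ (1 + q)) ^ q = γ ^ (1 + q) := by
  have h2 := gcond_q2 hp he hq hγ
  calc (γ ^ (1 + q)) ^ q = γ ^ q * γ ^ q ^ 2 := by
        rw [← pow_mul, add_mul, one_mul, pow_add, ← sq]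
    _ = γ ^ (1 + q) := by rw [h2, pow_add, pow_one, mul_comm]

include hp he hq in
lemma gcond_mul {γ' : F} (h1 : gcond q n γ) (h2 : gcond q n γ') : gcond q n (γ * γ') := by
  refine ⟨fun h => ?_, fun h => ?_⟩
  · rw [mul_pow, h1.1 h, h2.1 h, one_mul]
  · rw [mul_pow, h1.2 h, h2.2 h, one_mul]

include hp he hq in
lemma gcond_inv (h1 : gcond q n γ) : gcond q n γ⁻¹ := by
  refine ⟨fun h => ?_, fun h => ?_⟩
  · rw [inv_pow, h1.1 h, inv_one]
  · rw [inv_pow, h1.2 h, inv_one]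

end Gam
section FrId
variable {p e q n r : ℕ} {F : Type*} [Field F] [Fintype F]
variable (hp : p.Prime) (he : 0 < e) (hq : q = p ^ e) (hF : Fintype.card F = q ^ n)
variable (hrn : r ≤ n) (hodd : Even n → Odd r)

open Stmt15

include hp he hq hF hrn hodd in
lemma gcond_qr {γ : F} (hγ : gcond q n γ) : γ ^ q ^ r = γ ^ q :=
  gcond_qk_odd hp he hq hγ hodd

include hp he hq hF hrn hodd in
lemma gcond_qnr {γ : F} (hγ : gcond q n γ) : γ ^ q ^ (n - r) = γ ^ q := by
  refine gcond_qk_odd hp he hq hγ (fun hn => ?_)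
  exact Nat.Even.sub_odd hrn hn (hodd hn)

include hp he hq hF hrn hodd in
lemma gcond_pow1q {γ : F} (hγ : gcond q n γ) (x : F) :
    (γ * x) ^ (1 + q ^ r) = γ ^ (1 + q) * x ^ (1 + q ^ r) := by
  rw [mul_pow, pow_add, pow_one, pow_add γ, pow_one, gcond_qr hp he hq hF hrn hodd hγ,
    pow_add, pow_one]

include hp he hq hF hrn hodd in
lemma fr_smul {γ : F} (hγ : gcond q n γ) (x : F) :
    fr q n r (γ * x) = γ ^ (1 + q) * fr q n r x := by
  rw [fr_eq hF hrn, fr_eq hF hrn, gcond_pow1q hp he hq hF hrn hodd hγ,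
    Tn_smul _ (gcond_c_fix hp he hq hγ)]

include hp he hq hF hrn in
lemma fr_neg (x : F) : fr q n r (-x) = fr q n r x := by
  rw [fr_eq hF hrn, fr_eq hF hrn]
  congr 1
  rw [pow_add, pow_one, pow_add, pow_one, qpow_neg hp he hq hF x r, neg_mul_neg]

include hp he hq hF hrn in
lemma Tn_twist (x y : F) : Tn q n (y * x ^ q ^ r) = Tn q n (x * y ^ q ^ (n - r)) := by
  have h := Tn_pow_qk hF (y * x ^ q ^ r) (n - r)
  rw [← h]
  congr 1
  rw [mul_pow, ← pow_mul, ← pow_add]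
  have : r + (n - r) = n := by omega
  rw [this, pow_card_q hF, mul_comm]

include hp he hq hF hrn in
lemma fr_add (x y : F) :
    fr q n r (x + y) = fr q n r x + fr q n r y
      + Tn q n (x * (y ^ q ^ r + y ^ q ^ (n - r))) := by
  have hxy : (x + y) ^ (1 + q ^ r)
      = x ^ (1 + q ^ r) + y ^ (1 + q ^ r) + (x * y ^ q ^ r + y * x ^ q ^ r) := by
    rw [pow_add, pow_one, pow_add, pow_one, pow_add, pow_one,
      qpow_add hp he hq hF x y r]
    ring
  rw [fr_eq hF hrn, fr_eq hF hrn, fr_eq hF hrn, hxy,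
    Tn_add hp he hq hF, Tn_add hp he hq hF, Tn_add hp he hq hF,
    Tn_twist hp he hq hF hrn x y, mul_add, Tn_add hp he hq hF]

include hp he hq hF hrn in
lemma Tn_c_delta (δ : F) :
    Tn q n ((δ ^ q ^ (n - r) + δ ^ q ^ r) * δ) = fr q n r δ + fr q n r δ := by
  have h1 : Tn q n (δ ^ q ^ r * δ) = fr q n r δ := by
    rw [fr_eq hF hrn]
    congr 1
    rw [pow_add, pow_one, mul_comm]
  have h2 : Tn q n (δ ^ q ^ (n - r) * δ) = fr q n r δ := by
    have h := Tn_pow_qk hF (δ ^ q ^ (n - r) * δ) r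
    rw [← h]
    have : (δ ^ q ^ (n - r) * δ) ^ q ^ r = δ ^ q ^ r * δ := by
      rw [mul_pow, ← pow_mul, ← pow_add q (n - r) r]
      have hnn : n - r + r = n := by omega
      rw [hnn, pow_card_q hF, mul_comm]
    rw [this, h1]
  rw [add_mul, Tn_add hp he hq hF, h1, h2]
end FrId
/-- The set `G` of maps `φ_{γ,δ,μ} : (a,b) ↦ (γa + δ, γ^{1+q}b + (δ^{q^{n−r}}+δ^{q^r})γa + μ)`
where `T_n(μ) = f_r(δ)` and `γ^{q−1} = 1` if `n` is odd, `γ^{q²−1} = 1` if `n` is even. -/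
def Gmaps (q n r : ℕ) (F : Type*) [CommRing F] : Set (F × F → F × F) :=
  {φ | ∃ γ δ μ : F, Tn q n μ = fr q n r δ ∧
      (Odd n → γ ^ (q - 1) = 1) ∧ (Even n → γ ^ (q ^ 2 - 1) = 1) ∧
      φ = fun ab : F × F =>
        (γ * ab.1 + δ, γ ^ (1 + q) * ab.2 + (δ ^ q ^ (n - r) + δ ^ q ^ r) * γ * ab.1 + μ)}

section Grp
variable {p e q n r : ℕ} {F : Type*} [Field F] [Fintype F]
variable (hp : p.Prime) (he : 0 < e) (hq : q = p ^ e) (hF : Fintype.card F = q ^ n)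
variable (hrn : r ≤ n) (hodd : Even n → Odd r)

open Stmt15

lemma mem_Gmaps {γ δ μ : F} (h1 : Tn q n μ = fr q n r δ) (h2 : gcond q n γ) :
    (fun ab : F × F =>
      (γ * ab.1 + δ, γ ^ (1 + q) * ab.2 + (δ ^ q ^ (n - r) + δ ^ q ^ r) * γ * ab.1 + μ))
      ∈ Gmaps q n r F :=
  ⟨γ, δ, μ, h1, h2.1, h2.2, rfl⟩

include hp he hq hF hrn hodd in
lemma comp_mem_aux {γ δ μ γ' δ' μ' : F} (hγ : gcond q n γ) (hγ' : gcond q n γ')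
    (h1 : Tn q n μ = fr q n r δ) (h1' : Tn q n μ' = fr q n r δ') :
    Tn q n (γ ^ (1 + q) * μ' + (δ ^ q ^ (n - r) + δ ^ q ^ r) * γ * δ' + μ)
      = fr q n r (γ * δ' + δ) := by
  have hc := gcond_c_fix hp he hq hγ
  rw [Tn_add hp he hq hF, Tn_add hp he hq hF, Tn_smul _ hc, h1', h1,
    fr_add hp he hq hF hrn (γ * δ') δ, fr_smul hp he hq hF hrn hodd hγ]
  have : (δ ^ q ^ (n - r) + δ ^ q ^ r) * γ * δ' = γ * δ' * (δ ^ q ^ r + δ ^ q ^ (n - r)) := by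
    ring
  rw [this]
  ring

include hp he hq hF hrn hodd in
lemma comp_formula {γ : F} (hγ : gcond q n γ) (δ μ γ' δ' μ' : F) :
    ((fun ab : F × F =>
        (γ * ab.1 + δ, γ ^ (1 + q) * ab.2 + (δ ^ q ^ (n - r) + δ ^ q ^ r) * γ * ab.1 + μ)) ∘
      (fun ab : F × F =>
        (γ' * ab.1 + δ', γ' ^ (1 + q) * ab.2 + (δ' ^ q ^ (n - r) + δ' ^ q ^ r) * γ' * ab.1 + μ')))
    = fun ab : F × F =>
        (γ * γ' * ab.1 + (γ * δ' + δ),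
          (γ * γ') ^ (1 + q) * ab.2
            + ((γ * δ' + δ) ^ q ^ (n - r) + (γ * δ' + δ) ^ q ^ r) * (γ * γ') * ab.1
            + (γ ^ (1 + q) * μ' + (δ ^ q ^ (n - r) + δ ^ q ^ r) * γ * δ' + μ)) := by
  funext ab
  have hnr : (γ * δ' + δ) ^ q ^ (n - r) = γ ^ q * δ' ^ q ^ (n - r) + δ ^ q ^ (n - r) := by
    rw [qpow_add hp he hq hF, mul_pow, gcond_qnr hp he hq hF hrn hodd hγ]
  have hrr : (γ * δ' + δ) ^ q ^ r = γ ^ q * δ' ^ q ^ r + δ ^ q ^ r := by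
    rw [qpow_add hp he hq hF, mul_pow, gcond_qr hp he hq hF hrn hodd hγ]
  have hmp : (γ * γ') ^ (1 + q) = γ ^ (1 + q) * γ' ^ (1 + q) := mul_pow γ γ' (1 + q)
  have hga : γ ^ (1 + q) = γ * γ ^ q := by rw [pow_add, pow_one]
  simp only [Function.comp_apply]
  refine Prod.ext ?_ ?_
  · simp only []
    ring
  · simp only []
    rw [hnr, hrr, hmp, hga]
    ring

include hp he hq hF hrn hodd in
lemma comp_mem {φ ψ : F × F → F × F} (hφ : φ ∈ Gmaps q n r F) (hψ : ψ ∈ Gmaps q n r F) :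
    φ ∘ ψ ∈ Gmaps q n r F := by
  obtain ⟨γ, δ, μ, h1, h2, h3, rfl⟩ := hφ
  obtain ⟨γ', δ', μ', h1', h2', h3', rfl⟩ := hψ
  have hγ : gcond q n γ := ⟨h2, h3⟩
  have hγ' : gcond q n γ' := ⟨h2', h3'⟩
  rw [comp_formula hp he hq hF hrn hodd hγ δ μ γ' δ' μ']
  exact mem_Gmaps (comp_mem_aux hp he hq hF hrn hodd hγ hγ' h1 h1')
    (gcond_mul hp he hq hγ hγ')

include hp he hq hF in
lemma id_mem_form : (fun ab : F × F =>
    ((1:F) * ab.1 + 0, (1:F) ^ (1 + q) * ab.2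
      + ((0:F) ^ q ^ (n - r) + (0:F) ^ q ^ r) * 1 * ab.1 + 0)) = id := by
  have h2 : 2 ≤ q := two_le_q hp he hq
  funext ab
  simp [zero_pow (pow_pos (by omega : 0 < q) _).ne', id_eq]

include hp he hq hF hrn hodd in
lemma inv_mem {φ : F × F → F × F} (hφ : φ ∈ Gmaps q n r F) :
    ∃ ψ ∈ Gmaps q n r F, φ ∘ ψ = id ∧ ψ ∘ φ = id := by
  obtain ⟨γ, δ, μ, h1, h2, h3, rfl⟩ := hφ
  have hγ : gcond q n γ := ⟨h2, h3⟩
  have hγ0 : γ ≠ 0 := gcond_ne_zero hp he hq hγ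
  have hγi : gcond q n γ⁻¹ := gcond_inv hp he hq hγ
  set c : F := δ ^ q ^ (n - r) + δ ^ q ^ r with hc
  have hni : ∀ k : ℕ, (-(γ⁻¹ * δ)) ^ q ^ k = -((γ ^ q ^ k)⁻¹ * δ ^ q ^ k) := fun k => by
    rw [qpow_neg hp he hq hF, mul_pow, inv_pow]
  have e1 : (-(γ⁻¹ * δ)) ^ q ^ (n - r) = -((γ ^ q)⁻¹ * δ ^ q ^ (n - r)) := by
    rw [hni, gcond_qnr hp he hq hF hrn hodd hγ]
  have e2 : (-(γ⁻¹ * δ)) ^ q ^ r = -((γ ^ q)⁻¹ * δ ^ q ^ r) := by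
    rw [hni, gcond_qr hp he hq hF hrn hodd hγ]
  have hq0 : γ ^ q ≠ 0 := pow_ne_zero q hγ0
  have hgg : γ * γ⁻¹ = 1 := mul_inv_cancel₀ hγ0
  have hgg' : γ⁻¹ * γ = 1 := inv_mul_cancel₀ hγ0
  have hpp : γ ^ (1 + q) * γ⁻¹ ^ (1 + q) = 1 := by
    rw [← mul_pow, hgg, one_pow]
  refine ⟨_, mem_Gmaps (γ := γ⁻¹) (δ := -(γ⁻¹ * δ))
    (μ := (γ⁻¹) ^ (1 + q) * (c * δ - μ)) ?_ hγi, ?_, ?_⟩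
  · -- Tn μ' = fr δ'
    rw [Tn_smul _ (gcond_c_fix hp he hq hγi), Tn_sub hp he hq hF, Tn_c_delta hp he hq hF hrn, h1,
      fr_neg hp he hq hF hrn, fr_smul hp he hq hF hrn hodd hγi]
    ring
  · -- φ ∘ ψ = id
    rw [comp_formula hp he hq hF hrn hodd hγ δ μ γ⁻¹ (-(γ⁻¹ * δ)) (γ⁻¹ ^ (1 + q) * (c * δ - μ))]
    have hδ0 : γ * -(γ⁻¹ * δ) + δ = 0 := by
      rw [mul_neg, ← mul_assoc, hgg, one_mul]; ring
    have hμ0 : γ ^ (1 + q) * (γ⁻¹ ^ (1 + q) * (c * δ - μ))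
        + (δ ^ q ^ (n - r) + δ ^ q ^ r) * γ * -(γ⁻¹ * δ) + μ = 0 := by
      have h2' : γ * (γ⁻¹ * δ) = δ := by rw [← mul_assoc, hgg, one_mul]
      rw [← hc]
      linear_combination (c * δ - μ) * hpp - c * h2'
    rw [hδ0, hμ0, hgg]
    exact id_mem_form hp he hq hF
  · -- ψ ∘ φ = id
    rw [comp_formula hp he hq hF hrn hodd hγi (-(γ⁻¹ * δ)) (γ⁻¹ ^ (1 + q) * (c * δ - μ)) γ δ μ]
    have hδ0 : γ⁻¹ * δ + -(γ⁻¹ * δ) = 0 := by ring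
    have hμ0 : γ⁻¹ ^ (1 + q) * μ
        + ((-(γ⁻¹ * δ)) ^ q ^ (n - r) + (-(γ⁻¹ * δ)) ^ q ^ r) * γ⁻¹ * δ
        + γ⁻¹ ^ (1 + q) * (c * δ - μ) = 0 := by
      rw [e1, e2, inv_pow, hc]
      simp only [pow_add, pow_one, inv_pow]
      ring
    rw [hδ0, hμ0, hgg']
    exact id_mem_form hp he hq hF
end Grp
section Count
variable {p e q n r : ℕ} {F : Type*} [Field F] [Fintype F]
variable (hp : p.Prime) (he : 0 < e) (hq : q = p ^ e) (hF : Fintype.card F = q ^ n)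

open Stmt15 Polynomial

include hF in
lemma card_pow_eq_one {d : ℕ} (hd : 0 < d) (hdvd : d ∣ q ^ n - 1) (hN : 1 < q ^ n) :
    Nat.card {x : F | x ^ d = 1} = d := by
  classical
  have hcardu : Fintype.card Fˣ = q ^ n - 1 := by
    rw [Fintype.card_units, hF]
  obtain ⟨g, hg⟩ := IsCyclic.exists_generator (α := Fˣ)
  have horder : orderOf g = q ^ n - 1 := by
    rw [orderOf_eq_card_of_forall_mem_zpowers hg, Nat.card_eq_fintype_card, hcardu]
  have hN0 : q ^ n - 1 ≠ 0 := by omega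
  have hdd : (q ^ n - 1) / d ∣ q ^ n - 1 := Nat.div_dvd_of_dvd hdvd
  have hu : orderOf (g ^ ((q ^ n - 1) / d)) = d := by
    rw [orderOf_pow, horder, Nat.gcd_eq_right hdd, Nat.div_div_self hdvd hN0]
  have hprim : IsPrimitiveRoot ((g ^ ((q ^ n - 1) / d) : Fˣ) : F) d := by
    have h := IsPrimitiveRoot.orderOf ((g ^ ((q ^ n - 1) / d) : Fˣ) : F)
    rwa [orderOf_units, hu] at h
  have hset : {x : F | x ^ d = 1} = ↑(Polynomial.nthRootsFinset d (1 : F)) := by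
    ext x
    simp [Polynomial.mem_nthRootsFinset hd (1 : F)]
  rw [hset, Nat.card_coe_set_eq, Set.ncard_coe_finset, hprim.card_nthRootsFinset]

include hp he hq hF in
lemma Tn_card_ker (hn : 0 < n) : Nat.card {z : F | Tn q n z = 0} = q ^ (n - 1) := by
  classical
  have hq2 : 2 ≤ q := two_le_q hp he hq
  have Tn0 : Tn q n (0 : F) = 0 := by
    simp [Tn, zero_pow (pow_pos (by omega : 0 < q) _).ne']
  set T : F →+ F :=
    { toFun := Tn q n, map_zero' := Tn0, map_add' := Tn_add hp he hq hF } with hT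
  set P : Polynomial F := ∑ i ∈ Finset.range n, Polynomial.X ^ q ^ i with hP
  have hPeval : ∀ z : F, P.eval z = Tn q n z := fun z => by
    simp [hP, Tn, Polynomial.eval_finset_sum]
  have hPcoeff : P.coeff (q ^ (n - 1)) = 1 := by
    rw [hP, Polynomial.finset_sum_coeff]
    have hcong : ∀ i ∈ Finset.range n,
        (Polynomial.X ^ q ^ i : Polynomial F).coeff (q ^ (n - 1))
          = if i = n - 1 then 1 else 0 := by
      intro i hi
      have hiff : (q ^ (n - 1) = q ^ i) ↔ (i = n - 1) :=
        ⟨fun h => (Nat.pow_right_injective hq2 h).symm, fun h => by rw [h]⟩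
      simp [Polynomial.coeff_X_pow, hiff]
    rw [Finset.sum_congr rfl hcong, Finset.sum_ite_eq' (Finset.range n) (n - 1)]
    have : n - 1 ∈ Finset.range n := by simp; omega
    simp [this]
  have hPne : P ≠ 0 := fun h => by simp [h] at hPcoeff
  have hPdeg : P.natDegree ≤ q ^ (n - 1) := by
    apply Polynomial.natDegree_sum_le_of_forall_le
    intro i hi
    rw [Polynomial.natDegree_X_pow]
    exact Nat.pow_le_pow_right (by omega) (by simp only [Finset.mem_range] at hi; omega)
  -- kernel bound
  have hker_sub : ((T.ker : AddSubgroup F) : Set F) ⊆ ↑P.roots.toFinset := by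
    intro z hz
    have hz' : Tn q n z = 0 := hz
    simp only [Finset.coe_sort_coe, Multiset.mem_toFinset, Finset.mem_coe]
    rw [Polynomial.mem_roots hPne]
    rw [Polynomial.IsRoot, hPeval]
    exact hz'
  have hker_le : Nat.card T.ker ≤ q ^ (n - 1) := by
    have h1 : Nat.card T.ker = ((T.ker : AddSubgroup F) : Set F).ncard := by
      rw [← Nat.card_coe_set_eq]; rfl
    rw [h1]
    calc ((T.ker : AddSubgroup F) : Set F).ncard ≤ (↑P.roots.toFinset : Set F).ncard :=
          Set.ncard_le_ncard hker_sub (Set.toFinite _)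
      _ = P.roots.toFinset.card := Set.ncard_coe_finset _
      _ ≤ Multiset.card P.roots := Multiset.toFinset_card_le _
      _ ≤ P.natDegree := Polynomial.card_roots' P
      _ ≤ q ^ (n - 1) := hPdeg
  -- range bound
  have hQdeg : (Polynomial.X ^ q - Polynomial.X : Polynomial F).natDegree = q := by
    rw [Polynomial.natDegree_sub_eq_left_of_natDegree_lt, Polynomial.natDegree_X_pow]
    rw [Polynomial.natDegree_X_pow, Polynomial.natDegree_X]; omega
  have hQne : (Polynomial.X ^ q - Polynomial.X : Polynomial F) ≠ 0 := fun h => by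
    rw [h] at hQdeg; simp at hQdeg; omega
  have hrange_sub : ((T.range : AddSubgroup F) : Set F)
      ⊆ ↑(Polynomial.X ^ q - Polynomial.X : Polynomial F).roots.toFinset := by
    rintro x ⟨z, rfl⟩
    have hx : (Tn q n z) ^ q = Tn q n z := Tn_qpow_self hp he hq hF z
    simp only [Finset.coe_sort_coe, Multiset.mem_toFinset, Finset.mem_coe]
    rw [Polynomial.mem_roots hQne]
    simp [Polynomial.IsRoot, sub_eq_zero]
    exact hx
  have hrange_le : Nat.card T.range ≤ q := by
    have h1 : Nat.card T.range = ((T.range : AddSubgroup F) : Set F).ncard := by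
      rw [← Nat.card_coe_set_eq]; rfl
    rw [h1]
    calc ((T.range : AddSubgroup F) : Set F).ncard
        ≤ (↑(Polynomial.X ^ q - Polynomial.X : Polynomial F).roots.toFinset : Set F).ncard :=
          Set.ncard_le_ncard hrange_sub (Set.toFinite _)
      _ = (Polynomial.X ^ q - Polynomial.X : Polynomial F).roots.toFinset.card :=
          Set.ncard_coe_finset _
      _ ≤ Multiset.card (Polynomial.X ^ q - Polynomial.X : Polynomial F).roots :=
          Multiset.toFinset_card_le _
      _ ≤ (Polynomial.X ^ q - Polynomial.X : Polynomial F).natDegree :=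
          Polynomial.card_roots' _
      _ = q := hQdeg
  -- product
  have hquot : Nat.card (F ⧸ T.ker) = Nat.card T.range :=
    Nat.card_congr (QuotientAddGroup.quotientKerEquivRange T).toEquiv
  have hprod : q ^ n = Nat.card T.range * Nat.card T.ker := by
    have := AddSubgroup.card_eq_card_quotient_mul_card_addSubgroup T.ker
    rw [hquot] at this
    rw [← this, Nat.card_eq_fintype_card, hF]
  -- squeeze
  have hkn : Nat.card T.ker = q ^ (n - 1) := by
    have hqq : q * q ^ (n - 1) = q ^ n := by
      rw [← pow_succ']
      congr 1; omega
    have hle : q * q ^ (n - 1) ≤ q * Nat.card T.ker := by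
      rw [hqq, hprod]
      exact Nat.mul_le_mul_right _ hrange_le
    have := Nat.le_of_mul_le_mul_left hle (by omega : 0 < q)
    omega
  have hfinal : {z : F | Tn q n z = 0} = ((T.ker : AddSubgroup F) : Set F) := by
    ext z
    constructor
    · intro hz; exact hz
    · intro hz; exact hz
  rw [hfinal, Nat.card_coe_set_eq] at *
  rw [← hkn]
  rw [← Nat.card_coe_set_eq]
  rfl
end Count
section Final
variable {p e q n r : ℕ} {F : Type*} [Field F] [Fintype F]
variable (hp : p.Prime) (he : 0 < e) (hq : q = p ^ e) (hF : Fintype.card F = q ^ n)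
variable (hrn : r ≤ n) (hn : 0 < n)

open Stmt15

include hp he hq hF hrn hn in
lemma card_S : Nat.card {dm : F × F | Tn q n dm.2 = fr q n r dm.1} = q ^ (2 * n - 1) := by
  classical
  have hmem1 : ∀ (δ : F) (z : {z : F | Tn q n z = 0}),
      Tn q n (z.1 + δ ^ (1 + q ^ r)) = fr q n r δ := by
    intro δ z
    rw [Tn_add hp he hq hF, z.2, fr_eq hF hrn, zero_add]
  have hmem2 : ∀ (dm : {dm : F × F | Tn q n dm.2 = fr q n r dm.1}),
      Tn q n (dm.1.2 - dm.1.1 ^ (1 + q ^ r)) = 0 := by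
    intro dm
    rw [Tn_sub hp he hq hF, dm.2, fr_eq hF hrn, sub_self]
  have E : (F × {z : F | Tn q n z = 0}) ≃ {dm : F × F | Tn q n dm.2 = fr q n r dm.1} :=
    { toFun := fun x => ⟨(x.1, x.2.1 + x.1 ^ (1 + q ^ r)), hmem1 x.1 x.2⟩
      invFun := fun y => (y.1.1, ⟨y.1.2 - y.1.1 ^ (1 + q ^ r), hmem2 y⟩)
      left_inv := fun x => by
        ext <;> simp
      right_inv := fun y => by
        ext <;> simp }
  rw [← Nat.card_congr E, Nat.card_prod, Nat.card_coe_set_eq,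
    ← Nat.card_coe_set_eq, Tn_card_ker hp he hq hF hn, Nat.card_eq_fintype_card, hF,
    ← pow_add]
  congr 1
  omega

include hp he hq hF hn in
lemma card_Gam :
    Nat.card {γ : F | gcond q n γ} = if Odd n then q - 1 else q ^ 2 - 1 := by
  have hq2 : 2 ≤ q := two_le_q hp he hq
  have hq4 : 4 ≤ q ^ 2 := by calc (4:ℕ) = 2 * 2 := rfl
                                  _ ≤ q * q := Nat.mul_le_mul hq2 hq2
                                  _ = q ^ 2 := (sq q).symm
  have hN : 1 < q ^ n := Nat.one_lt_pow hn.ne' (by omega)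
  rcases Nat.even_or_odd n with hev | hodd'
  · rw [if_neg (Nat.not_odd_iff_even.mpr hev)]
    have hset : {γ : F | gcond q n γ} = {γ : F | γ ^ (q ^ 2 - 1) = 1} := by
      ext γ
      constructor
      · exact fun h => h.2 hev
      · exact fun h => ⟨fun hodd => absurd hev (Nat.not_even_iff_odd.mpr hodd), fun _ => h⟩
    rw [hset]
    refine card_pow_eq_one hF (by omega) ?_ hN
    obtain ⟨m, hm⟩ := hev
    have := Nat.sub_dvd_pow_sub_pow (q ^ 2) 1 m
    simpa [← pow_mul, one_pow, hm, two_mul, Nat.mul_comm] using this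
  · rw [if_pos hodd']
    have hset : {γ : F | gcond q n γ} = {γ : F | γ ^ (q - 1) = 1} := by
      ext γ
      constructor
      · exact fun h => h.1 hodd'
      · exact fun h => ⟨fun _ => h, fun hev => absurd hev (Nat.not_even_iff_odd.mpr hodd')⟩
    rw [hset]
    refine card_pow_eq_one hF (by omega) ?_ hN
    have := Nat.sub_dvd_pow_sub_pow q 1 n
    simpa using this

include hp he hq hF hrn hn in
lemma card_Gmaps (hodd : Even n → Odd r) :
    (Gmaps q n r F).ncard = q ^ (2 * n - 1) * (if Odd n then q - 1 else q ^ 2 - 1) := by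
  classical
  set Φ : F × F × F → (F × F → F × F) := fun t => fun ab : F × F =>
    (t.1 * ab.1 + t.2.1,
      t.1 ^ (1 + q) * ab.2 + (t.2.1 ^ q ^ (n - r) + t.2.1 ^ q ^ r) * t.1 * ab.1 + t.2.2) with hΦ
  set A : Set (F × F × F) :=
    {t | gcond q n t.1 ∧ Tn q n t.2.2 = fr q n r t.2.1} with hA
  have him : Gmaps q n r F = Φ '' A := by
    ext φ
    constructor
    · rintro ⟨γ, δ, μ, h1, h2, h3, rfl⟩
      exact ⟨(γ, δ, μ), ⟨⟨h2, h3⟩, h1⟩, rfl⟩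
    · rintro ⟨⟨γ, δ, μ⟩, ⟨h2, h1⟩, rfl⟩
      exact ⟨γ, δ, μ, h1, h2.1, h2.2, rfl⟩
  have hinj : Set.InjOn Φ A := by
    rintro ⟨γ, δ, μ⟩ hmem ⟨γ', δ', μ'⟩ hmem' heq
    have h00 := congrFun heq (0, 0)
    have h10 := congrFun heq (1, 0)
    simp only [hΦ, Prod.mk.injEq, mul_zero, mul_one, zero_add, add_zero, mul_zero] at h00 h10
    obtain ⟨hδ, hμ⟩ := h00
    obtain ⟨hγ, -⟩ := h10
    have : γ = γ' := by
      have := hγ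
      rw [hδ] at this
      exact add_right_cancel this
    simp [this, hδ, hμ]
  rw [him, Set.ncard_image_of_injOn hinj]
  have hAprod : A = {γ : F | gcond q n γ} ×ˢ {dm : F × F | Tn q n dm.2 = fr q n r dm.1} := by
    ext ⟨γ, δ, μ⟩
    simp [hA, Set.mem_prod]
  rw [hAprod, ← Nat.card_coe_set_eq,
    Nat.card_congr (Equiv.Set.prod _ _), Nat.card_prod,
    card_Gam hp he hq hF hn, card_S hp he hq hF hrn hn, Nat.mul_comm]
end Final
/-- Every element of `G` is a bijection of `F_{q^n}²`, `G` is closed under composition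
and under taking inverses (so `G` is a subgroup of the symmetric group on `F_{q^n}²`),
and `#G = q^{2n−1}(q−1)` if `n` is odd, `q^{2n−1}(q²−1)` if `n` is even. -/
theorem stmt15 (p e q n r : ℕ) (hp : p.Prime) (he : 0 < e) (hq : q = p ^ e)
    (hn : 2 < n) (hr1 : (n + 1) / 2 ≤ r) (hr2 : r ≤ n - 1) (hgcd : Nat.gcd n r = 1)
    (F : Type*) [Field F] [Fintype F] (hF : Fintype.card F = q ^ n) :
    (∀ φ ∈ Gmaps q n r F, Function.Bijective φ) ∧
    (∀ φ ∈ Gmaps q n r F, ∀ ψ ∈ Gmaps q n r F, φ ∘ ψ ∈ Gmaps q n r F) ∧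
    (∀ φ ∈ Gmaps q n r F, ∃ ψ ∈ Gmaps q n r F, φ ∘ ψ = id ∧ ψ ∘ φ = id) ∧
    (Gmaps q n r F).ncard = q ^ (2 * n - 1) * (if Odd n then q - 1 else q ^ 2 - 1) := by
  have hn0 : 0 < n := by omega
  have hrn : r ≤ n := by omega
  have hodd : Even n → Odd r := fun hev => odd_of_gcd hev hgcd
  refine ⟨?_, ?_, ?_, ?_⟩
  · intro φ hφ
    obtain ⟨ψ, -, hl, hr'⟩ := inv_mem hp he hq hF hrn hodd hφ
    exact Function.bijective_iff_has_inverse.mpr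
      ⟨ψ, fun x => congrFun hr' x, fun x => congrFun hl x⟩
  · intro φ hφ ψ hψ
    exact comp_mem hp he hq hF hrn hodd hφ hψ
  · intro φ hφ
    exact inv_mem hp he hq hF hrn hodd hφ
  · exact card_Gmaps hp he hq hF hrn hn0 hodd
end

section
/- Let K be a field of characteristic p containing F_q (for instance an algebraic closure of F_p), and let c ∈ K be a nonzero element such that c^{q^r+1} = c^{q^{n−r}+1} and such that λ := c^{q^r+1} satisfies λ^q = λ (i.e., λ ∈ F_q). Then c^{q^n} = c (i.e., c ∈ F_{q^n}); moreover c^{q−1} = 1 if n is odd, and c^{q²−1} = 1 if n is even. -/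
private lemma stmt17_zmod_dvd_iff (d q k : ℕ) (hq : 1 ≤ q) :
    d ∣ q ^ k - 1 ↔ ((q : ZMod d)) ^ k = 1 := by
  rw [← CharP.cast_eq_zero_iff (ZMod d) d, Nat.cast_sub (Nat.one_le_pow _ _ hq),
    Nat.cast_pow, Nat.cast_one, sub_eq_zero]

private lemma stmt17_sq_sub_one (a : ℕ) (ha : 1 ≤ a) : (a + 1) * (a - 1) = a * a - 1 := by
  obtain ⟨b, rfl⟩ : ∃ b, a = b + 1 := ⟨a - 1, by omega⟩
  simp only [Nat.add_sub_cancel]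
  exact Nat.eq_sub_of_add_eq (by ring)

/-- Let `K` be a field of characteristic `p` containing `F_q`, and let `c ∈ K` be a
nonzero element with `c^{q^r+1} = c^{q^{n−r}+1}` and such that `λ = c^{q^r+1}`
satisfies `λ^q = λ` (i.e. `λ ∈ F_q`). Then `c^{q^n} = c` (i.e. `c ∈ F_{q^n}`);
moreover `c^{q−1} = 1` if `n` is odd, and `c^{q²−1} = 1` if `n` is even. -/
theorem stmt17 (p e q n r : ℕ) (hp : p.Prime) (he : 0 < e) (hq : q = p ^ e)
    (hn : 2 ≤ n) (hr1 : (n + 1) / 2 ≤ r) (hr2 : r ≤ n - 1) (hgcd : Nat.gcd n r = 1)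
    (K : Type*) [Field K] [CharP K p] (c : K) (hc : c ≠ 0)
    (h1 : c ^ (q ^ r + 1) = c ^ (q ^ (n - r) + 1))
    (h2 : (c ^ (q ^ r + 1)) ^ q = c ^ (q ^ r + 1)) :
    c ^ q ^ n = c ∧
    (Odd n → c ^ (q - 1) = 1) ∧
    (Even n → c ^ (q ^ 2 - 1) = 1) := by
  have hq2 : 2 ≤ q := by
    rw [hq]
    calc 2 ≤ p := hp.two_le
    _ ≤ p ^ e := Nat.le_self_pow he.ne' p
  clear hq hp he
  -- numerical facts
  have h2rn : n ≤ 2 * r := by omega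
  have hr0 : 1 ≤ r := by omega
  have hnr0 : 1 ≤ n - r := by omega
  have hnrr : n - r ≤ r := by omega
  -- move to the unit group
  set u : Kˣ := Units.mk0 c hc with hu
  have hval : ∀ M : ℕ, (u ^ M : Kˣ).val = c ^ M := by
    intro M; rw [Units.val_pow_eq_pow_val]; rfl
  have hu1 : u ^ (q ^ r + 1) = u ^ (q ^ (n - r) + 1) := by
    apply Units.ext; rw [hval, hval]; exact h1
  have hu2 : (u ^ (q ^ r + 1)) ^ q = u ^ (q ^ r + 1) := by
    apply Units.ext
    simp only [Units.val_pow_eq_pow_val, Units.val_mk0]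
    exact h2
  -- u ^ (q^r - q^(n-r)) = 1
  have hu3 : u ^ (q ^ r) = u ^ (q ^ (n - r)) := by
    have h := hu1
    rw [pow_succ, pow_succ] at h
    exact mul_right_cancel h
  have hle : q ^ (n - r) ≤ q ^ r := Nat.pow_le_pow_right (by omega) hnrr
  have hu4 : u ^ (q ^ r - q ^ (n - r)) = 1 := by
    have h : u ^ (q ^ r - q ^ (n - r)) * u ^ (q ^ (n - r)) = 1 * u ^ (q ^ (n - r)) := by
      rw [one_mul, ← pow_add, Nat.sub_add_cancel hle, hu3]
    exact mul_right_cancel h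
  -- u ^ ((q^r+1)*(q-1)) = 1
  have hmul : (q ^ r + 1) * (q - 1) + (q ^ r + 1) = (q ^ r + 1) * q := by
    have : (q ^ r + 1) * (q - 1) + (q ^ r + 1) * 1 = (q ^ r + 1) * ((q - 1) + 1) := by
      rw [← Nat.mul_add]
    rw [Nat.mul_one] at this
    rw [this, Nat.sub_add_cancel (by omega)]
  have huN : u ^ ((q ^ r + 1) * (q - 1)) = 1 := by
    have h : u ^ ((q ^ r + 1) * (q - 1)) * u ^ (q ^ r + 1) = 1 * u ^ (q ^ r + 1) := by
      rw [one_mul, ← pow_add, hmul, pow_mul, hu2]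
    exact mul_right_cancel h
  have hNpos : 0 < (q ^ r + 1) * (q - 1) :=
    Nat.mul_pos (by positivity) (by omega)
  have hfin : IsOfFinOrder u := isOfFinOrder_iff_pow_eq_one.mpr ⟨_, hNpos, huN⟩
  set d : ℕ := orderOf u with hd
  have hdpos : 0 < d := hfin.orderOf_pos
  have hdN : d ∣ (q ^ r + 1) * (q - 1) := orderOf_dvd_of_pow_eq_one huN
  -- d ∣ q^(2r) - 1
  have hd2r : d ∣ q ^ (2 * r) - 1 := by
    refine hdN.trans ?_
    have h1' : (q ^ r + 1) * (q - 1) ∣ (q ^ r + 1) * (q ^ r - 1) :=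
      Nat.mul_dvd_mul_left _ (by simpa using Nat.sub_dvd_pow_sub_pow q 1 r)
    refine h1'.trans (dvd_of_eq ?_)
    rw [stmt17_sq_sub_one _ (Nat.one_le_pow _ _ (by omega)), ← pow_add]
    ring_nf
  -- d is coprime to q
  have hcopq : Nat.Coprime d q := by
    refine Nat.Coprime.coprime_dvd_left hdN (Nat.Coprime.mul ?_ ?_)
    · have h : Nat.Coprime (1 + q ^ (r - 1) * q) q :=
        (Nat.coprime_add_mul_right_left 1 q (q ^ (r - 1))).mpr (Nat.coprime_one_left q)
      have he : q ^ (r - 1) * q = q ^ r := by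
        rw [← pow_succ]
        congr 1
        omega
      rw [he, Nat.add_comm] at h
      exact h
    · obtain ⟨q', rfl⟩ : ∃ q', q = q' + 1 := ⟨q - 1, by omega⟩
      simp only [Nat.add_sub_cancel]
      have h : Nat.Coprime (1 + q' * 1) q' :=
        (Nat.coprime_add_mul_left_left 1 q' 1).mpr (Nat.coprime_one_left q')
      rw [Nat.mul_one, Nat.add_comm] at h
      exact h.symm
  -- d ∣ q^(2r - n) - 1
  have hds : d ∣ q ^ (2 * r - n) - 1 := by
    have hsplit : q ^ r = q ^ (n - r) * q ^ (2 * r - n) := by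
      rw [← pow_add]
      congr 1
      omega
    have hkey : q ^ r - q ^ (n - r) = q ^ (n - r) * (q ^ (2 * r - n) - 1) := by
      rw [Nat.mul_sub, Nat.mul_one, ← hsplit]
    have hdvd : d ∣ q ^ (n - r) * (q ^ (2 * r - n) - 1) := by
      rw [← hkey]
      exact orderOf_dvd_of_pow_eq_one hu4
    exact (Nat.Coprime.pow_right _ hcopq).dvd_of_dvd_mul_left hdvd
  -- order of q mod d
  set m : ℕ := orderOf ((q : ZMod d)) with hm
  have key : ∀ k, d ∣ q ^ k - 1 ↔ m ∣ k := fun k =>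
    (stmt17_zmod_dvd_iff d q k (by omega)).trans orderOf_dvd_iff_pow_eq_one.symm
  have m2r : m ∣ 2 * r := (key _).mp hd2r
  have ms : m ∣ 2 * r - n := (key _).mp hds
  have mn : m ∣ n := by
    have h := Nat.dvd_sub m2r ms
    rwa [show 2 * r - (2 * r - n) = n by omega] at h
  have mg : m ∣ Nat.gcd n 2 := by
    have h1' : m ∣ Nat.gcd n (2 * r) := Nat.dvd_gcd mn m2r
    rwa [Nat.Coprime.gcd_mul_right_cancel_right 2 (Nat.coprime_comm.mp hgcd)] at h1'
  have dgg : d ∣ q ^ (Nat.gcd n 2) - 1 := (key _).mpr mg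
  -- back to c
  have hcone : ∀ M : ℕ, d ∣ M → c ^ M = 1 := by
    intro M hM
    have h := orderOf_dvd_iff_pow_eq_one.mp hM
    have h2' := congrArg Units.val h
    rw [hval] at h2'
    simpa using h2'
  refine ⟨?_, ?_, ?_⟩
  · -- c ^ q^n = c
    have hgn : Nat.gcd n 2 ∣ n := Nat.gcd_dvd_left n 2
    have hpow : q ^ (Nat.gcd n 2) - 1 ∣ q ^ n - 1 := by
      have h := Nat.sub_dvd_pow_sub_pow (q ^ (Nat.gcd n 2)) 1 (n / Nat.gcd n 2)
      rwa [one_pow, ← pow_mul, Nat.mul_div_cancel' hgn] at h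
    have hone : c ^ (q ^ n - 1) = 1 := hcone _ (dgg.trans hpow)
    have hqn1 : q ^ n - 1 + 1 = q ^ n := Nat.sub_add_cancel (Nat.one_le_pow _ _ (by omega))
    calc c ^ q ^ n = c ^ (q ^ n - 1 + 1) := by rw [hqn1]
    _ = c ^ (q ^ n - 1) * c := pow_succ c _
    _ = c := by rw [hone, one_mul]
  · -- odd case
    intro hodd
    have hg1 : Nat.gcd n 2 = 1 := Nat.coprime_two_right.mpr hodd
    rw [hg1, pow_one] at dgg
    exact hcone _ dgg
  · -- even case
    intro heven
    have hg2 : Nat.gcd n 2 = 2 := Nat.gcd_eq_right heven.two_dvd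
    rw [hg2] at dgg
    exact hcone _ dgg
end
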